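/- arXiv:2309.06944 — 4 statements merged into one kernel-verified Lean document; each statement's English description precedes it below -/
import Mathlib

section
/- Let G be a Klee-graph on at least 8 vertices having exactly two triangles (which are necessarily vertex-disjoint). Then exactly one edge of each triangle lies on a 4-cycle of G. -/
open SimpleGraph
open scoped Classical

/-- `H` is obtained from `G` by expanding the vertex `v` into a triangle. -/
def IsTriangleExpansion {V W : Type} (G : SimpleGraph V) (H : SimpleGraph W) : Prop :=
  ∃ (v : V) (t : Fin 3 → W) (g : {u : V // u ≠ v} → W) (σ : Fin 3 → {u : V // u ≠ v}),
    Function.Injective t ∧ Function.Injective g ∧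
    (Set.range t ∩ Set.range g = ∅) ∧ (Set.range t ∪ Set.range g = Set.univ) ∧
    Function.Injective σ ∧ (∀ i, G.Adj v (σ i).1) ∧
    (∀ u : {u : V // u ≠ v}, G.Adj v u.1 → u ∈ Set.range σ) ∧
    (∀ i j, H.Adj (t i) (t j) ↔ i ≠ j) ∧
    (∀ a b : {u : V // u ≠ v}, H.Adj (g a) (g b) ↔ G.Adj a.1 b.1) ∧
    (∀ i a, H.Adj (t i) (g a) ↔ a = σ i)

/-- Klee-graphs: `K₄` is Klee, and any triangle expansion of a Klee-graph is Klee. -/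
inductive IsKlee : ∀ {V : Type}, SimpleGraph V → Prop
  | base {V : Type} (G : SimpleGraph V) (e : V ≃ Fin 4)
      (h : ∀ a b : V, G.Adj a b ↔ a ≠ b) : IsKlee G
  | expand {V W : Type} (G : SimpleGraph V) (H : SimpleGraph W)
      (hG : IsKlee G) (h : IsTriangleExpansion G H) : IsKlee H

/-- A perfect matching given as a set of edges. -/
def IsPerfectMatchingSet {V : Type} (G : SimpleGraph V) (M : Set (Sym2 V)) : Prop :=
  M ⊆ G.edgeSet ∧ ∀ v : V, ∃! e : Sym2 V, e ∈ M ∧ v ∈ e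

/-- A cubic (3-regular) graph. -/
def IsCubic {V : Type} (G : SimpleGraph V) : Prop :=
  ∀ v : V, (G.neighborSet v).ncard = 3

/-- A circuit: a connected 2-regular subgraph. -/
def IsCircuitSub {V : Type} {G : SimpleGraph V} (C : G.Subgraph) : Prop :=
  C.coe.Connected ∧ ∀ v ∈ C.verts, (C.neighborSet v).ncard = 2

/-- A collection of pairwise vertex-disjoint circuits. -/
def IsDisjointCircuitCollection {V : Type} (G : SimpleGraph V) (𝒞 : Set G.Subgraph) : Prop :=
  (∀ C ∈ 𝒞, IsCircuitSub C) ∧ 𝒞.Pairwise fun C D => Disjoint C.verts D.verts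

/-- The edge cut determined by a vertex set `A`. -/
def cutEdges {V : Type} (G : SimpleGraph V) (A : Set V) : Set (Sym2 V) :=
  {e | e ∈ G.edgeSet ∧ ∃ a b : V, e = s(a, b) ∧ a ∈ A ∧ b ∉ A}

/-- `G` is cyclically `k`-edge-connected: every cyclic edge-cut has at least `k` edges. -/
def IsCyclicallyEdgeConnected {V : Type} (G : SimpleGraph V) (k : ℕ) : Prop :=
  ∀ A : Set V, ¬(G.induce A).IsAcyclic → ¬(G.induce Aᶜ).IsAcyclic →
    k ≤ (cutEdges G A).ncard

/-- A triangle of `G`, as a vertex set. -/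
def IsTriangleSet {V : Type} (G : SimpleGraph V) (T : Set V) : Prop :=
  ∃ a b c : V, T = {a, b, c} ∧ G.Adj a b ∧ G.Adj a c ∧ G.Adj b c

/-- An edge lying on a cycle of length `n`. -/
def LiesOnCycleOfLength {V : Type} [DecidableEq V] (G : SimpleGraph V) (e : Sym2 V) (n : ℕ) : Prop :=
  ∃ (a : V) (w : G.Walk a a), w.IsCycle ∧ w.length = n ∧ e ∈ w.edges

/-- The complement of `M` in `G` is a Hamiltonian cycle. -/
def ComplementIsHamCycle {V : Type} [DecidableEq V] (G : SimpleGraph V) (M : Set (Sym2 V)) : Prop :=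
  ∃ (a : V) (w : G.Walk a a), w.IsHamiltonianCycle ∧ {e | e ∈ w.edges} = G.edgeSet \ M

/-- A `1⁺`-factor: a spanning set of edges with all degrees at least one. -/
def Is1PlusFactor {V : Type} (G : SimpleGraph V) (F : Set (Sym2 V)) : Prop :=
  F ⊆ G.edgeSet ∧ ∀ v : V, ∃ e ∈ F, v ∈ e

/-- The Klee ladder `KL_{2k+2}`: the grid `P₂ □ P_k` together with two adjacent
vertices `inr 0` and `inr 1` joined to the first and last rung, respectively. -/
def kleeLadder (k : ℕ) : SimpleGraph ((Fin 2 × Fin k) ⊕ Fin 2) :=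
  SimpleGraph.fromRel fun a b =>
    (∃ i j j', a = .inl (i, j) ∧ b = .inl (i, j') ∧ (j' : ℕ) = (j : ℕ) + 1) ∨
    (∃ i i' j, a = .inl (i, j) ∧ b = .inl (i', j) ∧ i ≠ i') ∨
    (∃ i j, a = .inr 0 ∧ b = .inl (i, j) ∧ (j : ℕ) = 0) ∨
    (∃ i j, a = .inr 1 ∧ b = .inl (i, j) ∧ (j : ℕ) = k - 1) ∨
    (a = .inr 0 ∧ b = .inr 1)

/-- The ladder (`k`-sided prism) `L_{2k} = C_k □ K₂`. -/
def ladder (k : ℕ) : SimpleGraph (Fin 2 × ZMod k) :=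
  SimpleGraph.fromRel fun a b => (a.1 = b.1 ∧ b.2 = a.2 + 1) ∨ (a.2 = b.2 ∧ a.1 ≠ b.1)

/-- The Möbius ladder `ML_{2k}`: a `2k`-cycle plus all antipodal chords. -/
def mobiusLadder (k : ℕ) : SimpleGraph (ZMod (2 * k)) :=
  SimpleGraph.fromRel fun a b => b = a + 1 ∨ b = a + (k : ZMod (2 * k))

/-- The quasi-ladder `QL_{2m+4}`: the grid `P₂ □ P_m` together with a 4-cycle
on four new vertices `inr (i, 0)` (joined to the first rung) and
`inr (i, 1)` (joined to the last rung). -/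
def quasiLadder (m : ℕ) : SimpleGraph ((Fin 2 × Fin m) ⊕ (Fin 2 × Fin 2)) :=
  SimpleGraph.fromRel fun a b =>
    (∃ i j j', a = .inl (i, j) ∧ b = .inl (i, j') ∧ (j' : ℕ) = (j : ℕ) + 1) ∨
    (∃ i i' j, a = .inl (i, j) ∧ b = .inl (i', j) ∧ i ≠ i') ∨
    (∃ i i', a = .inr (i, 0) ∧ b = .inr (i', 1)) ∨
    (∃ i j, a = .inr (i, 0) ∧ b = .inl (i, j) ∧ (j : ℕ) = 0) ∨
    (∃ i j, a = .inr (i, 1) ∧ b = .inl (i, j) ∧ (j : ℕ) = m - 1)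

/-- The graph obtained from `G` by deleting the endvertices `u, v` of an edge and
adding the edges `αβ` and `γδ`. -/
def reducedGraph {V : Type} (G : SimpleGraph V) (u v α β γ δ : V) :
    SimpleGraph {x : V // x ≠ u ∧ x ≠ v} :=
  SimpleGraph.fromRel fun a b =>
    G.Adj a.1 b.1 ∨ (a.1 = α ∧ b.1 = β) ∨ (a.1 = γ ∧ b.1 = δ)

/-- The cyclic edge-connectivity of `G`. -/
noncomputable def cyclicEdgeConnectivity {V : Type} [Fintype V] (G : SimpleGraph V) : ℕ :=
  if ∃ A : Set V, ¬(G.induce A).IsAcyclic ∧ ¬(G.induce Aᶜ).IsAcyclic then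
    sInf {n | ∃ A : Set V, ¬(G.induce A).IsAcyclic ∧ ¬(G.induce Aᶜ).IsAcyclic ∧
      (cutEdges G A).ncard = n}
  else G.edgeSet.ncard - Fintype.card V + 1


/-! ### Auxiliary: 4-cycles as quadruples -/

def Quad {V : Type} (G : SimpleGraph V) (a b c d : V) : Prop :=
  a ≠ b ∧ a ≠ c ∧ a ≠ d ∧ b ≠ c ∧ b ≠ d ∧ c ≠ d ∧
    G.Adj a b ∧ G.Adj b c ∧ G.Adj c d ∧ G.Adj d a

def EdgeOfQuad {V : Type} (e : Sym2 V) (a b c d : V) : Prop :=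
  e = s(a,b) ∨ e = s(b,c) ∨ e = s(c,d) ∨ e = s(d,a)

def OnQuad {V : Type} (G : SimpleGraph V) (e : Sym2 V) : Prop :=
  ∃ a b c d, Quad G a b c d ∧ EdgeOfQuad e a b c d

def OnQuadAvoid {V : Type} (G : SimpleGraph V) (e : Sym2 V) (X : Set V) : Prop :=
  ∃ a b c d, Quad G a b c d ∧ EdgeOfQuad e a b c d ∧ a ∉ X ∧ b ∉ X ∧ c ∉ X ∧ d ∉ X

lemma OnQuadAvoid.onQuad {V : Type} {G : SimpleGraph V} {e : Sym2 V} {X : Set V}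
    (h : OnQuadAvoid G e X) : OnQuad G e := by
  obtain ⟨a,b,c,d,h1,h2,-⟩ := h; exact ⟨a,b,c,d,h1,h2⟩

lemma liesOn_iff_onQuad {V : Type} [DecidableEq V] (G : SimpleGraph V) (e : Sym2 V) :
    LiesOnCycleOfLength G e 4 ↔ OnQuad G e := by
  constructor
  · rintro ⟨a, w, hc, hl, he⟩
    cases w with
    | nil => simp at hl
    | cons hab w =>
    rename_i b
    cases w with
    | nil => simp at hl
    | cons hbc w =>
    rename_i c
    cases w with
    | nil => simp at hl
    | cons hcd w =>
    rename_i d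
    cases w with
    | nil => simp at hl
    | cons hda w =>
    cases w with
    | cons h w => simp [SimpleGraph.Walk.length_cons] at hl
    | nil =>
      rw [SimpleGraph.Walk.isCycle_def] at hc
      obtain ⟨-, -, hnd⟩ := hc
      simp [SimpleGraph.Walk.support_cons] at hnd
      simp [SimpleGraph.Walk.edges_cons] at he
      refine ⟨a, b, c, d, ⟨?_,?_,?_,?_,?_,?_, hab, hbc, hcd, hda⟩, ?_⟩ <;> tauto
  · rintro ⟨a, b, c, d, ⟨h1,h2,h3,h4,h5,h6,hab,hbc,hcd,hda⟩, he⟩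
    refine ⟨a, .cons hab (.cons hbc (.cons hcd (.cons hda .nil))), ?_, by simp, ?_⟩
    · rw [SimpleGraph.Walk.isCycle_def]
      refine ⟨?_, by simp, ?_⟩
      · rw [SimpleGraph.Walk.isTrail_def]
        simp [Sym2.eq_iff]
        tauto
      · simp
        tauto
    · simp
      tauto

/-! ### Expansion data -/

structure ExpData {V W : Type} (G : SimpleGraph V) (H : SimpleGraph W) (v : V) where
  t : Fin 3 → W
  g : {u : V // u ≠ v} → W
  σ : Fin 3 → {u : V // u ≠ v}
  t_inj : Function.Injective t
  g_inj : Function.Injective g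
  tg_ne : ∀ i a, t i ≠ g a
  cover : ∀ w : W, (∃ i, w = t i) ∨ (∃ a, w = g a)
  σ_inj : Function.Injective σ
  σ_adj : ∀ i, G.Adj v (σ i).1
  σ_all : ∀ a : {u : V // u ≠ v}, G.Adj v a.1 → ∃ i, σ i = a
  adj_tt : ∀ i j, H.Adj (t i) (t j) ↔ i ≠ j
  adj_gg : ∀ a b, H.Adj (g a) (g b) ↔ G.Adj a.1 b.1
  adj_tg : ∀ i a, H.Adj (t i) (g a) ↔ a = σ i

lemma IsTriangleExpansion.expData {V W : Type} {G : SimpleGraph V} {H : SimpleGraph W}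
    (h : IsTriangleExpansion G H) : ∃ v : V, Nonempty (ExpData G H v) := by
  obtain ⟨v, t, g, σ, h1, h2, h3, h4, h5, h6, h7, h8, h9, h10⟩ := h
  refine ⟨v, ⟨⟨t, g, σ, h1, h2, ?_, ?_, h5, h6, ?_, h8, h9, h10⟩⟩⟩
  · intro i a hia
    have : t i ∈ Set.range t ∩ Set.range g := ⟨⟨i, rfl⟩, ⟨a, hia.symm⟩⟩
    rw [h3] at this
    exact this
  · intro w
    have : w ∈ Set.range t ∪ Set.range g := h4 ▸ Set.mem_univ w
    rcases this with ⟨i, hi⟩ | ⟨a, ha⟩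
    · exact Or.inl ⟨i, hi.symm⟩
    · exact Or.inr ⟨a, ha.symm⟩
  · intro a ha
    rcases h7 a ha with ⟨i, hi⟩
    exact ⟨i, hi⟩

namespace ExpData

variable {V W : Type} {G : SimpleGraph V} {H : SimpleGraph W} {v : V} (D : ExpData G H v)

lemma adj_gt (a : {u : V // u ≠ v}) (i : Fin 3) : H.Adj (D.g a) (D.t i) ↔ a = D.σ i :=
  ⟨fun h => (D.adj_tg i a).1 h.symm, fun h => ((D.adj_tg i a).2 h).symm⟩

lemma quad_mixed {i j : Fin 3} (hij : i ≠ j) (hadj : G.Adj (D.σ i).1 (D.σ j).1) :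
    Quad H (D.t i) (D.t j) (D.g (D.σ j)) (D.g (D.σ i)) := by
  refine ⟨D.t_inj.ne hij, D.tg_ne _ _, D.tg_ne _ _, D.tg_ne _ _, D.tg_ne _ _,
    fun h => hij (D.σ_inj (D.g_inj h)).symm,
    (D.adj_tt i j).2 hij, (D.adj_tg j (D.σ j)).2 rfl, (D.adj_gg _ _).2 hadj.symm,
    (D.adj_gt (D.σ i) i).2 rfl⟩

lemma quad_lift {a b c d : V} (h : Quad G a b c d)
    (ha : a ≠ v) (hb : b ≠ v) (hc : c ≠ v) (hd : d ≠ v) :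
    Quad H (D.g ⟨a, ha⟩) (D.g ⟨b, hb⟩) (D.g ⟨c, hc⟩) (D.g ⟨d, hd⟩) := by
  obtain ⟨n1, n2, n3, n4, n5, n6, e1, e2, e3, e4⟩ := h
  exact ⟨fun h => n1 (congrArg Subtype.val (D.g_inj h)),
    fun h => n2 (congrArg Subtype.val (D.g_inj h)),
    fun h => n3 (congrArg Subtype.val (D.g_inj h)),
    fun h => n4 (congrArg Subtype.val (D.g_inj h)),
    fun h => n5 (congrArg Subtype.val (D.g_inj h)),
    fun h => n6 (congrArg Subtype.val (D.g_inj h)),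
    (D.adj_gg _ _).2 e1, (D.adj_gg _ _).2 e2, (D.adj_gg _ _).2 e3, (D.adj_gg _ _).2 e4⟩

/-- Normal form of a "mixed" 4-cycle through the new triangle. -/
def NF (a b c d : W) : Prop :=
  ∃ i j, i ≠ j ∧ G.Adj (D.σ i).1 (D.σ j).1 ∧
    ({a, b, c, d} : Set W) = {D.t i, D.t j, D.g (D.σ j), D.g (D.σ i)} ∧
    ∀ e : Sym2 W, EdgeOfQuad e a b c d ↔
      EdgeOfQuad e (D.t i) (D.t j) (D.g (D.σ j)) (D.g (D.σ i))

end ExpData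

lemma quad_rot {V : Type} {G : SimpleGraph V} {a b c d : V} (h : Quad G a b c d) :
    Quad G b c d a := by
  obtain ⟨n1, n2, n3, n4, n5, n6, e1, e2, e3, e4⟩ := h
  exact ⟨n4, n5, n1.symm, n6, n2.symm, n3.symm, e2, e3, e4, e1⟩

lemma edgeOfQuad_rot {V : Type} (e : Sym2 V) (a b c d : V) :
    EdgeOfQuad e b c d a ↔ EdgeOfQuad e a b c d := by
  unfold EdgeOfQuad; tauto

namespace ExpData

variable {V W : Type} {G : SimpleGraph V} {H : SimpleGraph W} {v : V} (D : ExpData G H v)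

lemma nf_rot {a b c d : W} (h : D.NF b c d a) : D.NF a b c d := by
  obtain ⟨i, j, hij, hadj, hset, hedge⟩ := h
  refine ⟨i, j, hij, hadj, ?_, fun e => (edgeOfQuad_rot e a b c d).symm.trans (hedge e)⟩
  rw [← hset]; ext x; simp; tauto

lemma quad_classify_t {i : Fin 3} {b c d : W} (h : Quad H (D.t i) b c d) :
    D.NF (D.t i) b c d := by
  obtain ⟨n1, n2, n3, n4, n5, n6, e1, e2, e3, e4⟩ := h
  rcases D.cover b with ⟨j, rfl⟩ | ⟨u, rfl⟩
  · have hij : i ≠ j := (D.adj_tt i j).1 e1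
    rcases D.cover c with ⟨k, rfl⟩ | ⟨u, rfl⟩
    · rcases D.cover d with ⟨l, rfl⟩ | ⟨u, rfl⟩
      · exfalso
        have hjk : j ≠ k := (D.adj_tt j k).1 e2
        have hik : i ≠ k := fun hh => n2 (congrArg D.t hh)
        have hil : i ≠ l := fun hh => n3 (congrArg D.t hh)
        have hjl : j ≠ l := fun hh => n5 (congrArg D.t hh)
        have hkl : k ≠ l := (D.adj_tt k l).1 e3
        have v1 : i.1 ≠ j.1 := fun hh => hij (Fin.ext hh)
        have v2 : j.1 ≠ k.1 := fun hh => hjk (Fin.ext hh)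
        have v3 : i.1 ≠ k.1 := fun hh => hik (Fin.ext hh)
        have v4 : i.1 ≠ l.1 := fun hh => hil (Fin.ext hh)
        have v5 : j.1 ≠ l.1 := fun hh => hjl (Fin.ext hh)
        have v6 : k.1 ≠ l.1 := fun hh => hkl (Fin.ext hh)
        have := i.isLt; have := j.isLt; have := k.isLt; have := l.isLt
        omega
      · have hu : u = D.σ i := (D.adj_gt u i).1 e4
        have hu2 : u = D.σ k := (D.adj_tg k u).1 e3
        exact absurd (congrArg D.t (D.σ_inj (hu.symm.trans hu2))) n2
    · have hu : u = D.σ j := (D.adj_tg j u).1 e2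
      rcases D.cover d with ⟨k, rfl⟩ | ⟨u', rfl⟩
      · have hu2 : u = D.σ k := (D.adj_gt u k).1 e3
        exact absurd (congrArg D.t (D.σ_inj (hu.symm.trans hu2))) n5
      · have hu' : u' = D.σ i := (D.adj_gt u' i).1 e4
        have hadj : G.Adj u.1 u'.1 := (D.adj_gg u u').1 e3
        subst hu hu'
        exact ⟨i, j, hij, hadj.symm, rfl, fun e => Iff.rfl⟩
  · have hu : u = D.σ i := (D.adj_tg i u).1 e1
    rcases D.cover d with ⟨k, rfl⟩ | ⟨u', rfl⟩
    · have hik : i ≠ k := fun hh => n3 (congrArg D.t hh)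
      rcases D.cover c with ⟨l, rfl⟩ | ⟨u', rfl⟩
      · have hu2 : u = D.σ l := (D.adj_gt u l).1 e2
        exact absurd (congrArg D.t (D.σ_inj (hu.symm.trans hu2))) n2
      · have hu' : u' = D.σ k := (D.adj_gt u' k).1 e3
        have hadj : G.Adj u.1 u'.1 := (D.adj_gg u u').1 e2
        subst hu hu'
        refine ⟨i, k, hik, hadj, ?_, ?_⟩
        · ext x; simp; tauto
        · intro e
          unfold EdgeOfQuad
          constructor
          · rintro (rfl | rfl | rfl | rfl)
            · exact Or.inr (Or.inr (Or.inr Sym2.eq_swap.symm))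
            · exact Or.inr (Or.inr (Or.inl Sym2.eq_swap.symm))
            · exact Or.inr (Or.inl Sym2.eq_swap.symm)
            · exact Or.inl Sym2.eq_swap.symm
          · rintro (rfl | rfl | rfl | rfl)
            · exact Or.inr (Or.inr (Or.inr Sym2.eq_swap.symm))
            · exact Or.inr (Or.inr (Or.inl Sym2.eq_swap.symm))
            · exact Or.inr (Or.inl Sym2.eq_swap.symm)
            · exact Or.inl Sym2.eq_swap.symm
    · have hu' : u' = D.σ i := (D.adj_gt u' i).1 e4
      exact absurd (congrArg D.g (hu.trans hu'.symm)) n5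

lemma quad_classify {a b c d : W} (h : Quad H a b c d) :
    (∃ pa pb pc pd, a = D.g pa ∧ b = D.g pb ∧ c = D.g pc ∧ d = D.g pd ∧
      Quad G pa.1 pb.1 pc.1 pd.1) ∨ D.NF a b c d := by
  rcases D.cover a with ⟨i, rfl⟩ | ⟨pa, rfl⟩
  · exact Or.inr (D.quad_classify_t h)
  rcases D.cover b with ⟨i, rfl⟩ | ⟨pb, rfl⟩
  · exact Or.inr (D.nf_rot (D.quad_classify_t (quad_rot h)))
  rcases D.cover c with ⟨i, rfl⟩ | ⟨pc, rfl⟩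
  · exact Or.inr (D.nf_rot (D.nf_rot (D.quad_classify_t (quad_rot (quad_rot h)))))
  rcases D.cover d with ⟨i, rfl⟩ | ⟨pd, rfl⟩
  · exact Or.inr (D.nf_rot (D.nf_rot (D.nf_rot (D.quad_classify_t (quad_rot (quad_rot (quad_rot h)))))))
  obtain ⟨n1, n2, n3, n4, n5, n6, e1, e2, e3, e4⟩ := h
  exact Or.inl ⟨pa, pb, pc, pd, rfl, rfl, rfl, rfl,
    fun hh => n1 (congrArg D.g (Subtype.ext hh)),
    fun hh => n2 (congrArg D.g (Subtype.ext hh)),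
    fun hh => n3 (congrArg D.g (Subtype.ext hh)),
    fun hh => n4 (congrArg D.g (Subtype.ext hh)),
    fun hh => n5 (congrArg D.g (Subtype.ext hh)),
    fun hh => n6 (congrArg D.g (Subtype.ext hh)),
    (D.adj_gg _ _).1 e1, (D.adj_gg _ _).1 e2, (D.adj_gg _ _).1 e3, (D.adj_gg _ _).1 e4⟩

end ExpData

/-! ### Triangles in expansions -/

lemma set3_image_inj {α β : Type} {f : α → β} (hf : Function.Injective f)
    {p q r p' q' r' : α} :
    ({f p, f q, f r} : Set β) = {f p', f q', f r'} ↔ ({p, q, r} : Set α) = {p', q', r'} := by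
  have h1 : ({f p, f q, f r} : Set β) = f '' {p, q, r} := by
    simp [Set.image_insert_eq]
  have h2 : ({f p', f q', f r'} : Set β) = f '' {p', q', r'} := by
    simp [Set.image_insert_eq]
  rw [h1, h2, Set.image_eq_image hf]

namespace ExpData

variable {V W : Type} {G : SimpleGraph V} {H : SimpleGraph W} {v : V} (D : ExpData G H v)

lemma tri_t : IsTriangleSet H {D.t 0, D.t 1, D.t 2} :=
  ⟨D.t 0, D.t 1, D.t 2, rfl, (D.adj_tt 0 1).2 (by decide), (D.adj_tt 0 2).2 (by decide),
    (D.adj_tt 1 2).2 (by decide)⟩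

lemma mem_tset (m : Fin 3) : D.t m ∈ ({D.t 0, D.t 1, D.t 2} : Set W) := by
  fin_cases m <;> simp

lemma tset_mem_elim {w : W} (h : w ∈ ({D.t 0, D.t 1, D.t 2} : Set W)) : ∃ m, w = D.t m := by
  simp only [Set.mem_insert_iff, Set.mem_singleton_iff] at h
  rcases h with h | h | h
  exacts [⟨0, h⟩, ⟨1, h⟩, ⟨2, h⟩]

lemma tri_sigma {i j : Fin 3} (hij : i ≠ j) (hadj : G.Adj (D.σ i).1 (D.σ j).1) :
    IsTriangleSet G {v, (D.σ i).1, (D.σ j).1} :=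
  ⟨v, _, _, rfl, D.σ_adj i, D.σ_adj j, hadj⟩

/-- the image in `W` of a set of vertices of `V` not containing `v`. -/
def gim (S : Set V) : Set W := {w | ∃ p : {u : V // u ≠ v}, p.1 ∈ S ∧ D.g p = w}

lemma mem_gim {x : V} (hx : x ≠ v) (hxS : x ∈ S) : D.g ⟨x, hx⟩ ∈ D.gim S :=
  ⟨⟨x, hx⟩, hxS, rfl⟩

lemma mem_gim' (p : {u : V // u ≠ v}) (hxS : p.1 ∈ S) : D.g p ∈ D.gim S :=
  ⟨p, hxS, rfl⟩

lemma gim_eq_iff {S S' : Set V} (h1 : v ∉ S) (h2 : v ∉ S') :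
    D.gim S = D.gim S' ↔ S = S' := by
  constructor
  · intro h
    ext x
    constructor
    · intro hx
      have hxv : x ≠ v := fun hh => h1 (hh ▸ hx)
      have : D.g ⟨x, hxv⟩ ∈ D.gim S' := h ▸ D.mem_gim hxv hx
      obtain ⟨p, hp, hpg⟩ := this
      have : p = ⟨x, hxv⟩ := D.g_inj hpg
      rw [this] at hp
      exact hp
    · intro hx
      have hxv : x ≠ v := fun hh => h2 (hh ▸ hx)
      have : D.g ⟨x, hxv⟩ ∈ D.gim S := h ▸ D.mem_gim hxv hx
      obtain ⟨p, hp, hpg⟩ := this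
      have : p = ⟨x, hxv⟩ := D.g_inj hpg
      rw [this] at hp
      exact hp
  · intro h; rw [h]

lemma gim_triple (p q r : {u : V // u ≠ v}) :
    D.gim {p.1, q.1, r.1} = {D.g p, D.g q, D.g r} := by
  ext x
  constructor
  · rintro ⟨p', hp', rfl⟩
    simp only [Set.mem_insert_iff, Set.mem_singleton_iff] at hp' ⊢
    rcases hp' with h | h | h
    · exact Or.inl (congrArg D.g (Subtype.ext h))
    · exact Or.inr (Or.inl (congrArg D.g (Subtype.ext h)))
    · exact Or.inr (Or.inr (congrArg D.g (Subtype.ext h)))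
  · intro hx
    simp only [Set.mem_insert_iff, Set.mem_singleton_iff] at hx
    rcases hx with rfl | rfl | rfl
    · exact ⟨p, by simp, rfl⟩
    · exact ⟨q, by simp, rfl⟩
    · exact ⟨r, by simp, rfl⟩

lemma tset_ne_gim (S : Set V) : ({D.t 0, D.t 1, D.t 2} : Set W) ≠ D.gim S := by
  intro h
  have : D.t 0 ∈ D.gim S := h ▸ (by simp)
  obtain ⟨p, -, hp⟩ := this
  exact D.tg_ne 0 p hp.symm

lemma tri_classify {T : Set W} (hT : IsTriangleSet H T) :
    T = {D.t 0, D.t 1, D.t 2} ∨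
      ∃ S : Set V, IsTriangleSet G S ∧ v ∉ S ∧ T = D.gim S := by
  obtain ⟨a, b, c, rfl, hab, hac, hbc⟩ := hT
  rcases D.cover a with ⟨i, rfl⟩ | ⟨p, rfl⟩
  · rcases D.cover b with ⟨j, rfl⟩ | ⟨q, rfl⟩
    · rcases D.cover c with ⟨k, rfl⟩ | ⟨r, rfl⟩
      · left
        have hij : i ≠ j := (D.adj_tt i j).1 hab
        have hik : i ≠ k := (D.adj_tt i k).1 hac
        have hjk : j ≠ k := (D.adj_tt j k).1 hbc
        have hall : ∀ l : Fin 3, l = i ∨ l = j ∨ l = k := by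
          intro l
          have b1 := i.isLt; have b2 := j.isLt; have b3 := k.isLt; have b4 := l.isLt
          have v1 : i.1 ≠ j.1 := fun hh => hij (Fin.ext hh)
          have v2 : i.1 ≠ k.1 := fun hh => hik (Fin.ext hh)
          have v3 : j.1 ≠ k.1 := fun hh => hjk (Fin.ext hh)
          have : l.1 = i.1 ∨ l.1 = j.1 ∨ l.1 = k.1 := by omega
          rcases this with h | h | h
          · exact Or.inl (Fin.ext h)
          · exact Or.inr (Or.inl (Fin.ext h))
          · exact Or.inr (Or.inr (Fin.ext h))
        ext x
        simp only [Set.mem_insert_iff, Set.mem_singleton_iff]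
        constructor
        · have triv : ∀ m : Fin 3, D.t m = D.t 0 ∨ D.t m = D.t 1 ∨ D.t m = D.t 2 := by
            intro m; fin_cases m <;> tauto
          rintro (rfl | rfl | rfl) <;> exact triv _
        · rintro (rfl | rfl | rfl)
          · rcases hall 0 with h | h | h <;> rw [← h] <;> tauto
          · rcases hall 1 with h | h | h <;> rw [← h] <;> tauto
          · rcases hall 2 with h | h | h <;> rw [← h] <;> tauto
      · have h1 : r = D.σ i := (D.adj_tg i r).1 hac
        have h2 : r = D.σ j := (D.adj_tg j r).1 hbc
        exact absurd (D.σ_inj (h1.symm.trans h2)) ((D.adj_tt i j).1 hab)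
    · rcases D.cover c with ⟨k, rfl⟩ | ⟨r, rfl⟩
      · have h1 : q = D.σ i := (D.adj_tg i q).1 hab
        have h2 : q = D.σ k := (D.adj_gt q k).1 hbc
        exact absurd (D.σ_inj (h1.symm.trans h2)) ((D.adj_tt i k).1 hac)
      · have h1 : q = D.σ i := (D.adj_tg i q).1 hab
        have h2 : r = D.σ i := (D.adj_tg i r).1 hac
        have h3 : G.Adj q.1 r.1 := (D.adj_gg q r).1 hbc
        rw [h1, h2] at h3
        exact absurd h3 (G.loopless.irrefl _)
  · rcases D.cover b with ⟨j, rfl⟩ | ⟨q, rfl⟩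
    · rcases D.cover c with ⟨k, rfl⟩ | ⟨r, rfl⟩
      · have h1 : p = D.σ j := (D.adj_gt p j).1 hab
        have h2 : p = D.σ k := (D.adj_gt p k).1 hac
        exact absurd (D.σ_inj (h1.symm.trans h2)) ((D.adj_tt j k).1 hbc)
      · have h1 : p = D.σ j := (D.adj_gt p j).1 hab
        have h2 : r = D.σ j := (D.adj_tg j r).1 hbc
        have h3 : G.Adj p.1 r.1 := (D.adj_gg p r).1 hac
        rw [h1, h2] at h3
        exact absurd h3 (G.loopless.irrefl _)
    · rcases D.cover c with ⟨k, rfl⟩ | ⟨r, rfl⟩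
      · have h1 : p = D.σ k := (D.adj_gt p k).1 hac
        have h2 : q = D.σ k := (D.adj_gt q k).1 hbc
        have h3 : G.Adj p.1 q.1 := (D.adj_gg p q).1 hab
        rw [h1, h2] at h3
        exact absurd h3 (G.loopless.irrefl _)
      · right
        refine ⟨{p.1, q.1, r.1}, ⟨p.1, q.1, r.1, rfl, (D.adj_gg _ _).1 hab,
          (D.adj_gg _ _).1 hac, (D.adj_gg _ _).1 hbc⟩, ?_, (D.gim_triple p q r).symm⟩
        intro hv
        simp only [Set.mem_insert_iff, Set.mem_singleton_iff] at hv
        rcases hv with h | h | h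
        exacts [p.2 h.symm, q.2 h.symm, r.2 h.symm]

lemma gim_tri {S : Set V} (hS : IsTriangleSet G S) (hv : v ∉ S) :
    IsTriangleSet H (D.gim S) := by
  obtain ⟨a, b, c, rfl, hab, hac, hbc⟩ := hS
  have ha : a ≠ v := fun h => hv (h ▸ (by simp : a ∈ ({a,b,c} : Set V)))
  have hb : b ≠ v := fun h => hv (h ▸ (by simp : b ∈ ({a,b,c} : Set V)))
  have hc : c ≠ v := fun h => hv (h ▸ (by simp : c ∈ ({a,b,c} : Set V)))
  have : D.gim {a, b, c} = {D.g ⟨a,ha⟩, D.g ⟨b,hb⟩, D.g ⟨c,hc⟩} := D.gim_triple ⟨a,ha⟩ ⟨b,hb⟩ ⟨c,hc⟩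
  rw [this]
  exact ⟨_, _, _, rfl, (D.adj_gg _ _).2 hab, (D.adj_gg _ _).2 hac, (D.adj_gg _ _).2 hbc⟩

end ExpData

/-! ### Global predicates for the induction -/

def TwoTriangles {V : Type} (G : SimpleGraph V) : Prop :=
  ∃ T1 T2, IsTriangleSet G T1 ∧ IsTriangleSet G T2 ∧ T1 ≠ T2 ∧
    ∀ T, IsTriangleSet G T → T = T1 ∨ T = T2

/-- weak goodness: exactly one edge of `S` lies on a 4-cycle avoiding `w`. -/
def GoodW {V : Type} (G : SimpleGraph V) (S : Set V) (w : V) : Prop :=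
  ∃ x y, x ∈ S ∧ y ∈ S ∧ x ≠ y ∧ OnQuadAvoid G s(x,y) {w} ∧
    ∀ c d, c ∈ S → d ∈ S → c ≠ d → OnQuadAvoid G s(c,d) {w} → s(c,d) = s(x,y)

/-- full goodness: one edge of `S` on a 4-cycle avoiding `w`; no other edge on any 4-cycle. -/
def GoodF {V : Type} (G : SimpleGraph V) (S : Set V) (w : V) : Prop :=
  ∃ x y, x ∈ S ∧ y ∈ S ∧ x ≠ y ∧ OnQuadAvoid G s(x,y) {w} ∧
    ∀ c d, c ∈ S → d ∈ S → c ≠ d → OnQuad G s(c,d) → s(c,d) = s(x,y)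

lemma GoodF.toGoodW {V : Type} {G : SimpleGraph V} {S : Set V} {w : V}
    (h : GoodF G S w) : GoodW G S w := by
  obtain ⟨x, y, h1, h2, h3, h4, h5⟩ := h
  exact ⟨x, y, h1, h2, h3, h4, fun c d hc hd hcd hq => h5 c d hc hd hcd hq.onQuad⟩

def P2 {V : Type} (G : SimpleGraph V) : Prop :=
  (∀ T T', IsTriangleSet G T → IsTriangleSet G T' → T ≠ T' → Disjoint T T') ∧
  (∃ T T', IsTriangleSet G T ∧ IsTriangleSet G T' ∧ T ≠ T') ∧
  (TwoTriangles G → ∀ T T' w, IsTriangleSet G T → IsTriangleSet G T' → T ≠ T' →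
    w ∈ T' → GoodW G T w)

lemma tri_nonempty {V : Type} {G : SimpleGraph V} {T : Set V} (h : IsTriangleSet G T) :
    ∃ x, x ∈ T := by
  obtain ⟨a, b, c, rfl, -⟩ := h
  exact ⟨a, by simp⟩

lemma exists_avoid {V : Type} {G : SimpleGraph V}
    (hdisj : ∀ T T', IsTriangleSet G T → IsTriangleSet G T' → T ≠ T' → Disjoint T T')
    (hex2 : ∃ T T', IsTriangleSet G T ∧ IsTriangleSet G T' ∧ T ≠ T') (v : V) :
    ∃ S, IsTriangleSet G S ∧ v ∉ S := by
  obtain ⟨S1, S2, h1, h2, h12⟩ := hex2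
  by_cases hv : v ∈ S1
  · exact ⟨S2, h2, fun hv2 => Set.disjoint_left.mp (hdisj _ _ h1 h2 h12) hv hv2⟩
  · exact ⟨S1, h1, hv⟩

namespace ExpData

variable {V W : Type} {G : SimpleGraph V} {H : SimpleGraph W} {v : V}

variable (D : ExpData G H v)

lemma g_sym2_congr {x y a b : V} (hx : x ≠ v) (hy : y ≠ v) (ha : a ≠ v) (hb : b ≠ v)
    (h : s(x,y) = s(a,b)) :
    s(D.g ⟨x,hx⟩, D.g ⟨y,hy⟩) = s(D.g ⟨a,ha⟩, D.g ⟨b,hb⟩) := by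
  rw [Sym2.eq_iff] at h ⊢
  rcases h with ⟨rfl, rfl⟩ | ⟨rfl, rfl⟩
  · exact Or.inl ⟨rfl, rfl⟩
  · exact Or.inr ⟨rfl, rfl⟩

lemma g_sym2_down {p q a b : {u : V // u ≠ v}}
    (h : s(D.g p, D.g q) = s(D.g a, D.g b)) : s(p.1, q.1) = s(a.1, b.1) := by
  rw [Sym2.eq_iff] at h ⊢
  rcases h with ⟨h1, h2⟩ | ⟨h1, h2⟩
  · exact Or.inl ⟨congrArg Subtype.val (D.g_inj h1), congrArg Subtype.val (D.g_inj h2)⟩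
  · exact Or.inr ⟨congrArg Subtype.val (D.g_inj h1), congrArg Subtype.val (D.g_inj h2)⟩

lemma edge_g_down {p q ra rb rc rd : {u : V // u ≠ v}}
    (h : EdgeOfQuad (s(D.g p, D.g q)) (D.g ra) (D.g rb) (D.g rc) (D.g rd)) :
    EdgeOfQuad (s(p.1, q.1)) ra.1 rb.1 rc.1 rd.1 := by
  rcases h with h | h | h | h
  · exact Or.inl (D.g_sym2_down h)
  · exact Or.inr (Or.inl (D.g_sym2_down h))
  · exact Or.inr (Or.inr (Or.inl (D.g_sym2_down h)))
  · exact Or.inr (Or.inr (Or.inr (D.g_sym2_down h)))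

lemma step_tri_disj (D : ExpData G H v)
    (hGdisj' : ∀ S S', IsTriangleSet G S → IsTriangleSet G S' → v ∉ S → v ∉ S' →
      S ≠ S' → Disjoint S S') :
    ∀ T T', IsTriangleSet H T → IsTriangleSet H T' → T ≠ T' → Disjoint T T' := by
  intro T T' hT hT' hne
  rcases D.tri_classify hT with rfl | ⟨S, hS, hvS, rfl⟩
  · rcases D.tri_classify hT' with hT'eq | ⟨S', hS', hvS', rfl⟩
    · exact absurd hT'eq.symm hne
    · rw [Set.disjoint_left]
      rintro x hx hx'
      obtain ⟨m, rfl⟩ := D.tset_mem_elim hx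
      obtain ⟨p, -, hp⟩ := hx'
      exact D.tg_ne m p hp.symm
  · rcases D.tri_classify hT' with rfl | ⟨S', hS', hvS', rfl⟩
    · rw [Set.disjoint_right]
      rintro x hx hx'
      obtain ⟨m, rfl⟩ := D.tset_mem_elim hx
      obtain ⟨p, -, hp⟩ := hx'
      exact D.tg_ne m p hp.symm
    · have hSS' : S ≠ S' := fun h => hne (by rw [h])
      have hd := hGdisj' S S' hS hS' hvS hvS' hSS'
      rw [Set.disjoint_left]
      rintro x ⟨p, hpS, rfl⟩ ⟨p', hpS', hp'⟩
      have : p' = p := D.g_inj hp'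
      subst this
      exact Set.disjoint_left.mp hd hpS hpS'

lemma step_two (D : ExpData G H v) (hex : ∃ S, IsTriangleSet G S ∧ v ∉ S) :
    ∃ T T', IsTriangleSet H T ∧ IsTriangleSet H T' ∧ T ≠ T' := by
  obtain ⟨S, hS, hv⟩ := hex
  exact ⟨_, _, D.tri_t, D.gim_tri hS hv, D.tset_ne_gim S⟩

end ExpData

namespace ExpData

variable {V W : Type} {G : SimpleGraph V} {H : SimpleGraph W} {v : V}

lemma stepFull (D : ExpData G H v) (hP2 : P2 G) (h2H : TwoTriangles H) :
    ∀ T T' w, IsTriangleSet H T → IsTriangleSet H T' → T ≠ T' → w ∈ T' → GoodF H T w := by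
  obtain ⟨hdisjG, hex2G, hclauseG⟩ := hP2
  intro T T' w hT hT' hTT' hw
  have uniqueS : ∀ S S' : Set V, IsTriangleSet G S → IsTriangleSet G S' → v ∉ S → v ∉ S' →
      S = S' := by
    intro S S' hS hS' hv1 hv2
    by_contra hne
    have hgS := D.gim_tri hS hv1
    have hgS' := D.gim_tri hS' hv2
    have hne' : D.gim S ≠ D.gim S' := fun h => hne ((D.gim_eq_iff hv1 hv2).1 h)
    have hneT1 := D.tset_ne_gim S
    have hneT2 := D.tset_ne_gim S'
    obtain ⟨T1, T2, -, -, h12, honly⟩ := h2H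
    rcases honly _ D.tri_t with e3 | e3 <;> rcases honly _ hgS with e1 | e1 <;>
      rcases honly _ hgS' with e2 | e2
    · exact hneT1 (e3.trans e1.symm)
    · exact hneT1 (e3.trans e1.symm)
    · exact hneT2 (e3.trans e2.symm)
    · exact hne' (e1.trans e2.symm)
    · exact hne' (e1.trans e2.symm)
    · exact hneT2 (e3.trans e2.symm)
    · exact hneT1 (e3.trans e1.symm)
    · exact hneT1 (e3.trans e1.symm)
  obtain ⟨S, hS, hvS⟩ : ∃ S, IsTriangleSet G S ∧ v ∉ S := exists_avoid hdisjG hex2G v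
  obtain ⟨A, hA, hvA⟩ : ∃ A, IsTriangleSet G A ∧ v ∈ A := by
    obtain ⟨S1, S2, h1, h2, h12⟩ := hex2G
    by_cases hv1 : v ∈ S1
    · exact ⟨S1, h1, hv1⟩
    by_cases hv2 : v ∈ S2
    · exact ⟨S2, h2, hv2⟩
    exact absurd (uniqueS S1 S2 h1 h2 hv1 hv2) h12
  have hAS : A ≠ S := fun h => hvS (h ▸ hvA)
  have hdisjAS := hdisjG _ _ hA hS hAS
  have honlyG : ∀ X, IsTriangleSet G X → X = A ∨ X = S := by
    intro X hX
    by_cases hvX : v ∈ X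
    · left
      by_contra hne
      exact Set.disjoint_left.mp (hdisjG _ _ hX hA hne) hvX hvA
    · exact Or.inr (uniqueS X S hX hS hvX hvS)
  have h2G : TwoTriangles G := ⟨A, S, hA, hS, hAS, honlyG⟩
  obtain ⟨x, y, hxv, hyv, hxy, hvx, hvy, hxyadj, hAxy⟩ :
      ∃ x y, x ≠ v ∧ y ≠ v ∧ x ≠ y ∧ G.Adj v x ∧ G.Adj v y ∧ G.Adj x y ∧ A = {v, x, y} := by
    obtain ⟨a1, a2, a3, hAeq, e12, e13, e23⟩ := hA
    subst hAeq
    simp only [Set.mem_insert_iff, Set.mem_singleton_iff] at hvA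
    rcases hvA with rfl | rfl | rfl
    · exact ⟨a2, a3, e12.ne', e13.ne', e23.ne, e12, e13, e23, rfl⟩
    · exact ⟨a1, a3, e12.ne, e23.ne', e13.ne, e12.symm, e23, e13, by ext z; simp; tauto⟩
    · exact ⟨a1, a2, e13.ne, e23.ne, e12.ne, e13.symm, e23.symm, e12, by ext z; simp; tauto⟩
  obtain ⟨i, hi⟩ := D.σ_all ⟨x, hxv⟩ hvx
  obtain ⟨j, hj⟩ := D.σ_all ⟨y, hyv⟩ hvy
  have hij : i ≠ j := by
    intro h
    rw [h, hj] at hi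
    exact hxy (congrArg Subtype.val hi).symm
  have hσi : (D.σ i).1 = x := congrArg Subtype.val hi
  have hσj : (D.σ j).1 = y := congrArg Subtype.val hj
  have hadjσ : G.Adj (D.σ i).1 (D.σ j).1 := by rw [hσi, hσj]; exact hxyadj
  have adjPair : ∀ k l : Fin 3, k ≠ l → G.Adj (D.σ k).1 (D.σ l).1 →
      s(D.t k, D.t l) = s(D.t i, D.t j) := by
    intro k l hkl hadj
    have htri := D.tri_sigma hkl hadj
    rcases honlyG _ htri with hEq | hEq
    · rw [hAxy] at hEq
      have hkl' : (D.σ k).1 ≠ (D.σ l).1 := fun h => hkl (D.σ_inj (Subtype.ext h))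
      have hk : (D.σ k).1 = x ∨ (D.σ k).1 = y := by
        have hm : (D.σ k).1 ∈ ({v, x, y} : Set V) := hEq ▸ (by simp)
        simp only [Set.mem_insert_iff, Set.mem_singleton_iff] at hm
        rcases hm with h | h | h
        · exact absurd h (D.σ k).2
        · exact Or.inl h
        · exact Or.inr h
      have hl : (D.σ l).1 = x ∨ (D.σ l).1 = y := by
        have hm : (D.σ l).1 ∈ ({v, x, y} : Set V) := hEq ▸ (by simp)
        simp only [Set.mem_insert_iff, Set.mem_singleton_iff] at hm
        rcases hm with h | h | h
        · exact absurd h (D.σ l).2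
        · exact Or.inl h
        · exact Or.inr h
      rcases hk with hk | hk <;> rcases hl with hl | hl
      · exact absurd (hk.trans hl.symm) hkl'
      · have hki : k = i := D.σ_inj (Subtype.ext (by rw [hk, hσi]))
        have hlj : l = j := D.σ_inj (Subtype.ext (by rw [hl, hσj]))
        rw [hki, hlj]
      · have hkj : k = j := D.σ_inj (Subtype.ext (by rw [hk, hσj]))
        have hli : l = i := D.σ_inj (Subtype.ext (by rw [hl, hσi]))
        rw [hkj, hli]
        exact Sym2.eq_swap
      · exact absurd (hk.trans hl.symm) hkl'
    · exact absurd (hEq ▸ (by simp : v ∈ ({v, (D.σ k).1, (D.σ l).1} : Set V))) hvS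
  have tEdgeUniq : ∀ (c d : W), c ∈ ({D.t 0, D.t 1, D.t 2} : Set W) →
      d ∈ ({D.t 0, D.t 1, D.t 2} : Set W) → c ≠ d → OnQuad H s(c,d) →
      s(c,d) = s(D.t i, D.t j) := by
    intro c d hc hd hcd hq
    obtain ⟨k, rfl⟩ := D.tset_mem_elim hc
    obtain ⟨l, rfl⟩ := D.tset_mem_elim hd
    have hkl : k ≠ l := fun h => hcd (congrArg D.t h)
    obtain ⟨q1, q2, q3, q4, hqq, he⟩ := hq
    rcases D.quad_classify hqq with ⟨ra, rb, rc2, rd2, rfl, rfl, rfl, rfl, -⟩ |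
      ⟨i', j', hij', hadj', hset', hedge'⟩
    · rcases he with h | h | h | h <;> rw [Sym2.eq_iff] at h <;>
        rcases h with ⟨h, -⟩ | ⟨h, -⟩ <;> exact absurd h (D.tg_ne _ _)
    · have hee := (hedge' _).1 he
      rcases hee with h | h | h | h
      · rw [Sym2.eq_iff] at h
        rcases h with ⟨h1, h2⟩ | ⟨h1, h2⟩
        · exact adjPair k l hkl (by rw [D.t_inj h1, D.t_inj h2]; exact hadj')
        · exact adjPair k l hkl (by rw [D.t_inj h1, D.t_inj h2]; exact hadj'.symm)
      · rw [Sym2.eq_iff] at h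
        rcases h with ⟨-, h1⟩ | ⟨h1, -⟩ <;> exact absurd h1 (D.tg_ne _ _)
      · rw [Sym2.eq_iff] at h
        rcases h with ⟨h1, -⟩ | ⟨h1, -⟩ <;> exact absurd h1 (D.tg_ne _ _)
      · rw [Sym2.eq_iff] at h
        rcases h with ⟨h1, -⟩ | ⟨-, h1⟩ <;> exact absurd h1 (D.tg_ne _ _)
  rcases D.tri_classify hT with rfl | ⟨S0, hS0, hvS0, rfl⟩
  · -- `T` is the new triangle
    rcases D.tri_classify hT' with hT'eq | ⟨S1, hS1, hvS1, hT'eq⟩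
    · exact absurd hT'eq.symm hTT'
    · have hS1S : S1 = S := uniqueS _ _ hS1 hS hvS1 hvS
      subst hS1S
      subst hT'eq
      obtain ⟨pw, hpwS, hpww⟩ := hw
      refine ⟨D.t i, D.t j, D.mem_tset i, D.mem_tset j, D.t_inj.ne hij, ?_, tEdgeUniq⟩
      refine ⟨D.t i, D.t j, D.g (D.σ j), D.g (D.σ i), D.quad_mixed hij hadjσ,
        Or.inl rfl, ?_, ?_, ?_, ?_⟩ <;> simp only [Set.mem_singleton_iff] <;> rw [← hpww]
      · exact fun h => D.tg_ne i pw h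
      · exact fun h => D.tg_ne j pw h
      · intro h
        have h2 : D.σ j = pw := D.g_inj h
        rw [← h2] at hpwS
        rw [hσj] at hpwS
        exact Set.disjoint_left.mp hdisjAS (by rw [hAxy]; simp) hpwS
      · intro h
        have h2 : D.σ i = pw := D.g_inj h
        rw [← h2] at hpwS
        rw [hσi] at hpwS
        exact Set.disjoint_left.mp hdisjAS (by rw [hAxy]; simp) hpwS
  · -- `T` is the image of the old triangle `S`
    have hS0S : S = S0 := (uniqueS _ _ hS0 hS hvS0 hvS).symm
    subst hS0S
    rcases D.tri_classify hT' with hT'eq | ⟨S1, hS1, hvS1, hT'eq⟩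
    · subst hT'eq
      obtain ⟨k, rfl⟩ := D.tset_mem_elim hw
      obtain ⟨x0, y0, hx0, hy0, hxy0, hquad0, huniq0⟩ :=
        hclauseG h2G S A v hS hA (fun h => hAS h.symm) hvA
      obtain ⟨q1, q2, q3, q4, hq, he, hq1, hq2, hq3, hq4⟩ := hquad0
      simp only [Set.mem_singleton_iff] at hq1 hq2 hq3 hq4
      have hx0v : x0 ≠ v := fun h => hvS (h ▸ hx0)
      have hy0v : y0 ≠ v := fun h => hvS (h ▸ hy0)
      refine ⟨D.g ⟨x0, hx0v⟩, D.g ⟨y0, hy0v⟩, D.mem_gim hx0v hx0, D.mem_gim hy0v hy0,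
        fun h => hxy0 (congrArg Subtype.val (D.g_inj h)), ?_, ?_⟩
      · refine ⟨D.g ⟨q1, hq1⟩, D.g ⟨q2, hq2⟩, D.g ⟨q3, hq3⟩, D.g ⟨q4, hq4⟩,
          D.quad_lift hq hq1 hq2 hq3 hq4, ?_, ?_, ?_, ?_, ?_⟩
        · rcases he with h | h | h | h
          · exact Or.inl (D.g_sym2_congr hx0v hy0v hq1 hq2 h)
          · exact Or.inr (Or.inl (D.g_sym2_congr hx0v hy0v hq2 hq3 h))
          · exact Or.inr (Or.inr (Or.inl (D.g_sym2_congr hx0v hy0v hq3 hq4 h)))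
          · exact Or.inr (Or.inr (Or.inr (D.g_sym2_congr hx0v hy0v hq4 hq1 h)))
        · simp only [Set.mem_singleton_iff]
          exact fun h => D.tg_ne k _ h.symm
        · simp only [Set.mem_singleton_iff]
          exact fun h => D.tg_ne k _ h.symm
        · simp only [Set.mem_singleton_iff]
          exact fun h => D.tg_ne k _ h.symm
        · simp only [Set.mem_singleton_iff]
          exact fun h => D.tg_ne k _ h.symm
      · intro c d hc hd hcd hq'
        obtain ⟨pc, hpcS, rfl⟩ := hc
        obtain ⟨pd, hpdS, rfl⟩ := hd
        have hpcd : pc.1 ≠ pd.1 := fun h => hcd (congrArg D.g (Subtype.ext h))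
        obtain ⟨r1, r2, r3, r4, hqq, hee⟩ := hq'
        rcases D.quad_classify hqq with ⟨ra, rb, rc2, rd2, rfl, rfl, rfl, rfl, hQG⟩ |
          ⟨i', j', hij', hadj', hset', hedge'⟩
        · have heG : EdgeOfQuad s(pc.1, pd.1) ra.1 rb.1 rc2.1 rd2.1 := D.edge_g_down hee
          have hOQ : OnQuadAvoid G s(pc.1, pd.1) {v} :=
            ⟨ra.1, rb.1, rc2.1, rd2.1, hQG, heG, by simp [ra.2], by simp [rb.2],
              by simp [rc2.2], by simp [rd2.2]⟩
          have heq := huniq0 pc.1 pd.1 hpcS hpdS hpcd hOQ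
          exact D.g_sym2_congr pc.2 pd.2 hx0v hy0v heq
        · have hee' := (hedge' _).1 hee
          rcases hee' with h | h | h | h
          · rw [Sym2.eq_iff] at h
            rcases h with ⟨h1, -⟩ | ⟨h1, -⟩ <;> exact absurd h1.symm (D.tg_ne _ _)
          · rw [Sym2.eq_iff] at h
            rcases h with ⟨h1, -⟩ | ⟨-, h1⟩ <;> exact absurd h1.symm (D.tg_ne _ _)
          · have hdown := D.g_sym2_down h
            have htri := D.tri_sigma hij' hadj'
            rcases honlyG _ htri with hEq | hEq
            · rw [Sym2.eq_iff] at hdown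
              have hmem : pc.1 ∈ A := by
                rcases hdown with ⟨h1, -⟩ | ⟨h1, -⟩ <;> rw [← hEq] <;> simp [h1]
              exact absurd hmem (Set.disjoint_right.mp hdisjAS hpcS)
            · exact absurd (hEq ▸ (by simp : v ∈ ({v, (D.σ i').1, (D.σ j').1} : Set V))) hvS
          · rw [Sym2.eq_iff] at h
            rcases h with ⟨-, h1⟩ | ⟨h1, -⟩ <;> exact absurd h1.symm (D.tg_ne _ _)
    · have hS1S : S1 = S := uniqueS _ _ hS1 hS hvS1 hvS
      rw [hT'eq, hS1S] at hTT'
      exact absurd rfl hTT'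

end ExpData

lemma fin3_aux : ∀ i j k i' j' : Fin 3, i ≠ j → i ≠ k → j ≠ k → i' ≠ j' → i' ≠ k → j' ≠ k →
    ((i' = i ∧ j' = j) ∨ (i' = j ∧ j' = i)) := by decide

lemma fin3_exists : ∀ k : Fin 3, ∃ i j : Fin 3, i ≠ j ∧ i ≠ k ∧ j ≠ k := by decide

namespace ExpData

variable {V W : Type} {G : SimpleGraph V} {H : SimpleGraph W} {v : V}

lemma stepP2_of_K4 (D : ExpData G H v) (e4 : V ≃ Fin 4)
    (hK4 : ∀ a b : V, G.Adj a b ↔ a ≠ b) : P2 H := by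
  have pigeon : ∀ a b c d x : V, a ≠ b → a ≠ c → a ≠ d → a ≠ x → b ≠ c → b ≠ d → b ≠ x →
      c ≠ d → c ≠ x → d ≠ x → False := by
    intro a b c d x h1 h2 h3 h4 h5 h6 h7 h8 h9 h10
    have inj : ∀ u w : V, u ≠ w → (e4 u).1 ≠ (e4 w).1 :=
      fun u w h hh => h (e4.injective (Fin.ext hh))
    have v1 := inj _ _ h1; have v2 := inj _ _ h2; have v3 := inj _ _ h3
    have v4 := inj _ _ h4; have v5 := inj _ _ h5; have v6 := inj _ _ h6
    have v7 := inj _ _ h7; have v8 := inj _ _ h8; have v9 := inj _ _ h9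
    have v10 := inj _ _ h10
    have b1 := (e4 a).isLt; have b2 := (e4 b).isLt; have b3 := (e4 c).isLt
    have b4 := (e4 d).isLt; have b5 := (e4 x).isLt
    omega
  have noquad : ∀ a b c d : V, Quad G a b c d → a ≠ v → b ≠ v → c ≠ v → d ≠ v → False := by
    rintro a b c d ⟨n1, n2, n3, n4, n5, n6, -⟩ ha hb hc hd
    exact pigeon a b c d v n1 n2 n3 ha n4 n5 hb n6 hc hd
  have hSuniv : ∀ S, IsTriangleSet G S → v ∉ S → S = {u : V | u ≠ v} := by
    intro S hS hv
    obtain ⟨a, b, c, rfl, hab, hac, hbc⟩ := hS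
    have ha : a ≠ v := fun h => hv (h ▸ (by simp : a ∈ ({a,b,c} : Set V)))
    have hb : b ≠ v := fun h => hv (h ▸ (by simp : b ∈ ({a,b,c} : Set V)))
    have hc : c ≠ v := fun h => hv (h ▸ (by simp : c ∈ ({a,b,c} : Set V)))
    ext z
    simp only [Set.mem_insert_iff, Set.mem_singleton_iff, Set.mem_setOf_eq]
    constructor
    · rintro (rfl | rfl | rfl) <;> assumption
    · intro hz
      by_contra hzn
      push_neg at hzn
      obtain ⟨hza, hzb, hzc⟩ := hzn
      exact pigeon a b c z v hab.ne hac.ne (fun h => hza h.symm) ha hbc.ne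
        (fun h => hzb h.symm) hb (fun h => hzc h.symm) hc hz
  have σsurj : ∀ p : {u : V // u ≠ v}, ∃ k, D.σ k = p :=
    fun p => D.σ_all p ((hK4 v p.1).2 (Ne.symm p.2))
  have σne : ∀ k l : Fin 3, k ≠ l → (D.σ k).1 ≠ (D.σ l).1 :=
    fun k l hkl h => hkl (D.σ_inj (Subtype.ext h))
  have σadj : ∀ k l : Fin 3, k ≠ l → G.Adj (D.σ k).1 (D.σ l).1 :=
    fun k l hkl => (hK4 _ _).2 (σne k l hkl)
  have hGdisj' : ∀ S S', IsTriangleSet G S → IsTriangleSet G S' → v ∉ S → v ∉ S' →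
      S ≠ S' → Disjoint S S' := by
    intro S S' hS hS' hv hv' hne
    exact absurd ((hSuniv S hS hv).trans (hSuniv S' hS' hv').symm) hne
  have hexS : ∃ S, IsTriangleSet G S ∧ v ∉ S := by
    refine ⟨{(D.σ 0).1, (D.σ 1).1, (D.σ 2).1},
      ⟨_, _, _, rfl, σadj 0 1 (by decide), σadj 0 2 (by decide), σadj 1 2 (by decide)⟩, ?_⟩
    intro hv
    simp only [Set.mem_insert_iff, Set.mem_singleton_iff] at hv
    rcases hv with h | h | h
    · exact (D.σ 0).2 h.symm
    · exact (D.σ 1).2 h.symm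
    · exact (D.σ 2).2 h.symm
  refine ⟨D.step_tri_disj hGdisj', D.step_two hexS, ?_⟩
  intro _ T T' w hT hT' hTT' hw
  rcases D.tri_classify hT with rfl | ⟨S0, hS0, hvS0, rfl⟩
  · -- T is the new triangle
    rcases D.tri_classify hT' with hT'eq | ⟨S1, hS1, hvS1, hT'eq⟩
    · exact absurd hT'eq.symm hTT'
    subst hT'eq
    obtain ⟨pw, hpwS, hpww⟩ := hw
    obtain ⟨k, hk⟩ := σsurj pw
    obtain ⟨i, j, hij, hik, hjk⟩ := fin3_exists k
    refine ⟨D.t i, D.t j, D.mem_tset i, D.mem_tset j, D.t_inj.ne hij, ?_, ?_⟩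
    · refine ⟨D.t i, D.t j, D.g (D.σ j), D.g (D.σ i), D.quad_mixed hij (σadj i j hij),
        Or.inl rfl, ?_, ?_, ?_, ?_⟩ <;> simp only [Set.mem_singleton_iff] <;>
        rw [← hpww, ← hk]
      · exact fun h => D.tg_ne i _ h
      · exact fun h => D.tg_ne j _ h
      · exact fun h => hjk (D.σ_inj (D.g_inj h))
      · exact fun h => hik (D.σ_inj (D.g_inj h))
    · intro c d hc hd hcd hqa
      obtain ⟨k1, rfl⟩ := D.tset_mem_elim hc
      obtain ⟨k2, rfl⟩ := D.tset_mem_elim hd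
      have hk12 : k1 ≠ k2 := fun h => hcd (congrArg D.t h)
      obtain ⟨r1, r2, r3, r4, hqq, hee, hr1, hr2, hr3, hr4⟩ := hqa
      simp only [Set.mem_singleton_iff] at hr1 hr2 hr3 hr4
      rcases D.quad_classify hqq with ⟨ra, rb, rc2, rd2, rfl, rfl, rfl, rfl, hQG⟩ |
        ⟨i', j', hij', hadj', hset', hedge'⟩
      · exact absurd hQG (fun hQ => noquad _ _ _ _ hQ ra.2 rb.2 rc2.2 rd2.2)
      · have hgi' : D.g (D.σ i') ≠ w := by
          have hm : D.g (D.σ i') ∈ ({r1, r2, r3, r4} : Set W) := by rw [hset']; simp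
          simp only [Set.mem_insert_iff, Set.mem_singleton_iff] at hm
          rcases hm with rfl | rfl | rfl | rfl <;> assumption
        have hgj' : D.g (D.σ j') ≠ w := by
          have hm : D.g (D.σ j') ∈ ({r1, r2, r3, r4} : Set W) := by rw [hset']; simp
          simp only [Set.mem_insert_iff, Set.mem_singleton_iff] at hm
          rcases hm with rfl | rfl | rfl | rfl <;> assumption
        have hi'k : i' ≠ k := by
          intro h
          exact hgi' (by rw [h, hk, hpww])
        have hj'k : j' ≠ k := by
          intro h
          exact hgj' (by rw [h, hk, hpww])
        have hmain := fin3_aux i j k i' j' hij hik hjk hij' hi'k hj'k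
        have hee' := (hedge' _).1 hee
        rcases hee' with h | h | h | h
        · rw [Sym2.eq_iff] at h
          rcases h with ⟨h1, h2⟩ | ⟨h1, h2⟩
          · have e1 : k1 = i' := D.t_inj h1
            have e2 : k2 = j' := D.t_inj h2
            subst e1; subst e2
            rcases hmain with ⟨rfl, rfl⟩ | ⟨rfl, rfl⟩
            · rfl
            · exact Sym2.eq_swap
          · have e1 : k1 = j' := D.t_inj h1
            have e2 : k2 = i' := D.t_inj h2
            subst e1; subst e2
            rcases hmain with ⟨rfl, rfl⟩ | ⟨rfl, rfl⟩
            · exact Sym2.eq_swap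
            · rfl
        · rw [Sym2.eq_iff] at h
          rcases h with ⟨-, h1⟩ | ⟨h1, -⟩ <;> exact absurd h1 (D.tg_ne _ _)
        · rw [Sym2.eq_iff] at h
          rcases h with ⟨h1, -⟩ | ⟨h1, -⟩ <;> exact absurd h1 (D.tg_ne _ _)
        · rw [Sym2.eq_iff] at h
          rcases h with ⟨h1, -⟩ | ⟨-, h1⟩ <;> exact absurd h1 (D.tg_ne _ _)
  · -- T is the image of the old triangle
    rcases D.tri_classify hT' with hT'eq | ⟨S1, hS1, hvS1, hT'eq⟩
    swap
    · rw [hT'eq, (hSuniv S1 hS1 hvS1).trans (hSuniv S0 hS0 hvS0).symm] at hTT'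
      exact absurd rfl hTT'
    subst hT'eq
    obtain ⟨k, rfl⟩ := D.tset_mem_elim hw
    obtain ⟨i, j, hij, hik, hjk⟩ := fin3_exists k
    have hS0eq : S0 = {u : V | u ≠ v} := hSuniv S0 hS0 hvS0
    have hmemS0 : ∀ m : Fin 3, (D.σ m).1 ∈ S0 := by
      intro m; rw [hS0eq]; exact (D.σ m).2
    refine ⟨D.g (D.σ i), D.g (D.σ j), D.mem_gim' _ (hmemS0 i), D.mem_gim' _ (hmemS0 j),
      fun h => hij (D.σ_inj (D.g_inj h)), ?_, ?_⟩
    · refine ⟨D.t i, D.t j, D.g (D.σ j), D.g (D.σ i), D.quad_mixed hij (σadj i j hij),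
        Or.inr (Or.inr (Or.inl Sym2.eq_swap)), ?_, ?_, ?_, ?_⟩ <;>
        simp only [Set.mem_singleton_iff]
      · exact fun h => hik (D.t_inj h)
      · exact fun h => hjk (D.t_inj h)
      · exact fun h => D.tg_ne k _ h.symm
      · exact fun h => D.tg_ne k _ h.symm
    · intro c d hc hd hcd hqa
      obtain ⟨pc, hpcS, rfl⟩ := hc
      obtain ⟨pd, hpdS, rfl⟩ := hd
      obtain ⟨r1, r2, r3, r4, hqq, hee, hr1, hr2, hr3, hr4⟩ := hqa
      simp only [Set.mem_singleton_iff] at hr1 hr2 hr3 hr4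
      rcases D.quad_classify hqq with ⟨ra, rb, rc2, rd2, rfl, rfl, rfl, rfl, hQG⟩ |
        ⟨i', j', hij', hadj', hset', hedge'⟩
      · exact absurd hQG (fun hQ => noquad _ _ _ _ hQ ra.2 rb.2 rc2.2 rd2.2)
      · have hti' : D.t i' ≠ D.t k := by
          have hm : D.t i' ∈ ({r1, r2, r3, r4} : Set W) := by rw [hset']; simp
          simp only [Set.mem_insert_iff, Set.mem_singleton_iff] at hm
          rcases hm with rfl | rfl | rfl | rfl <;> assumption
        have htj' : D.t j' ≠ D.t k := by
          have hm : D.t j' ∈ ({r1, r2, r3, r4} : Set W) := by rw [hset']; simp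
          simp only [Set.mem_insert_iff, Set.mem_singleton_iff] at hm
          rcases hm with rfl | rfl | rfl | rfl <;> assumption
        have hi'k : i' ≠ k := fun h => hti' (congrArg D.t h)
        have hj'k : j' ≠ k := fun h => htj' (congrArg D.t h)
        have hmain := fin3_aux i j k i' j' hij hik hjk hij' hi'k hj'k
        have hee' := (hedge' _).1 hee
        rcases hee' with h | h | h | h
        · rw [Sym2.eq_iff] at h
          rcases h with ⟨h1, -⟩ | ⟨h1, -⟩ <;> exact absurd h1.symm (D.tg_ne _ _)
        · rw [Sym2.eq_iff] at h
          rcases h with ⟨h1, -⟩ | ⟨-, h1⟩ <;> exact absurd h1.symm (D.tg_ne _ _)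
        · rw [Sym2.eq_iff] at h
          rcases h with ⟨h1, h2⟩ | ⟨h1, h2⟩
          · have e1 : pc = D.σ j' := D.g_inj h1
            have e2 : pd = D.σ i' := D.g_inj h2
            subst e1; subst e2
            rcases hmain with ⟨rfl, rfl⟩ | ⟨rfl, rfl⟩
            · exact Sym2.eq_swap
            · rfl
          · have e1 : pc = D.σ i' := D.g_inj h1
            have e2 : pd = D.σ j' := D.g_inj h2
            subst e1; subst e2
            rcases hmain with ⟨rfl, rfl⟩ | ⟨rfl, rfl⟩
            · rfl
            · exact Sym2.eq_swap
        · rw [Sym2.eq_iff] at h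
          rcases h with ⟨-, h1⟩ | ⟨h1, -⟩ <;> exact absurd h1.symm (D.tg_ne _ _)

lemma stepP2_of_P2 (D : ExpData G H v) (hP2 : P2 G) : P2 H := by
  have hGdisj' : ∀ S S', IsTriangleSet G S → IsTriangleSet G S' → v ∉ S → v ∉ S' →
      S ≠ S' → Disjoint S S' := fun S S' hS hS' _ _ hne => hP2.1 S S' hS hS' hne
  refine ⟨D.step_tri_disj hGdisj', D.step_two (exists_avoid hP2.1 hP2.2.1 v), ?_⟩
  intro h2H T T' w hT hT' hne hw
  exact (D.stepFull hP2 h2H T T' w hT hT' hne hw).toGoodW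

end ExpData

lemma klee_master {V : Type} (G : SimpleGraph V) (h : IsKlee G) :
    (∃ e : V ≃ Fin 4, ∀ a b : V, G.Adj a b ↔ a ≠ b) ∨ P2 G := by
  induction h with
  | base G e h => exact Or.inl ⟨e, h⟩
  | expand G H hG hexp ih =>
    obtain ⟨v, ⟨D⟩⟩ := hexp.expData
    rcases ih with ⟨e4, hK4⟩ | hP2
    · exact Or.inr (D.stepP2_of_K4 e4 hK4)
    · exact Or.inr (D.stepP2_of_P2 hP2)

lemma IsKlee.cases' {V : Type} {G : SimpleGraph V} (h : IsKlee G) :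
    (∃ e : V ≃ Fin 4, ∀ a b : V, G.Adj a b ↔ a ≠ b) ∨
    (∃ (V0 : Type) (G0 : SimpleGraph V0), IsKlee G0 ∧ IsTriangleExpansion G0 G) := by
  cases h with
  | base G e h => exact Or.inl ⟨e, h⟩
  | expand G0 H hG0 hexp => exact Or.inr ⟨_, G0, hG0, hexp⟩


theorem klee_two_triangles_four_cycle {V : Type} [Fintype V] [DecidableEq V]
    (G : SimpleGraph V) (hG : IsKlee G) (h8 : 8 ≤ Fintype.card V)
    (T1 T2 : Set V) (hT1 : IsTriangleSet G T1) (hT2 : IsTriangleSet G T2) (hne : T1 ≠ T2)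
    (honly : ∀ T : Set V, IsTriangleSet G T → T = T1 ∨ T = T2) :
    ∀ T ∈ ({T1, T2} : Set (Set V)),
      ∃! e : Sym2 V, (∃ x y : V, x ∈ T ∧ y ∈ T ∧ x ≠ y ∧ e = s(x, y)) ∧
        LiesOnCycleOfLength G e 4 := by 
  rcases hG.cases' with ⟨e4, -⟩ | ⟨V0, G0, hG0, hexp⟩
  · have : Fintype.card V = 4 := by simpa using Fintype.card_congr e4
    omega
  obtain ⟨v, ⟨D⟩⟩ := hexp.expData
  rcases klee_master G0 hG0 with ⟨e4, hK4⟩ | hP2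
  · -- 6 vertices: contradiction with `h8`
    exfalso
    letI : Fintype V0 := Fintype.ofEquiv _ e4.symm
    have hinj : Function.Injective (Sum.elim D.t D.g) := by
      rintro (i | p) (j | q) h <;> simp only [Sum.elim_inl, Sum.elim_inr] at h
      · rw [D.t_inj h]
      · exact absurd h (D.tg_ne _ _)
      · exact absurd h.symm (D.tg_ne _ _)
      · rw [D.g_inj h]
    have hsurj : Function.Surjective (Sum.elim D.t D.g) := by
      intro w
      rcases D.cover w with ⟨i, rfl⟩ | ⟨p, rfl⟩
      · exact ⟨.inl i, rfl⟩
      · exact ⟨.inr p, rfl⟩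
    have equiv : (Fin 3 ⊕ {u : V0 // u ≠ v}) ≃ V := Equiv.ofBijective _ ⟨hinj, hsurj⟩
    have h1 := Fintype.card_congr equiv
    rw [Fintype.card_sum, Fintype.card_fin] at h1
    have h2 : Fintype.card {u : V0 // u ≠ v} ≤ Fintype.card V0 := Fintype.card_subtype_le _
    have h3 : Fintype.card V0 = 4 := by simpa using Fintype.card_congr e4
    omega
  · have h2H : TwoTriangles G := ⟨T1, T2, hT1, hT2, hne, honly⟩
    have key : ∀ (Ta Tb : Set V), IsTriangleSet G Ta → IsTriangleSet G Tb → Ta ≠ Tb →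
        ∃! e : Sym2 V, (∃ x y : V, x ∈ Ta ∧ y ∈ Ta ∧ x ≠ y ∧ e = s(x, y)) ∧
          LiesOnCycleOfLength G e 4 := by
      intro Ta Tb hTa hTb hab
      obtain ⟨w, hww⟩ := tri_nonempty hTb
      obtain ⟨x, y, hx, hy, hxy, hqa, huniq⟩ := D.stepFull hP2 h2H Ta Tb w hTa hTb hab hww
      refine ⟨s(x,y), ⟨⟨x, y, hx, hy, hxy, rfl⟩, ?_⟩, ?_⟩
      · rw [liesOn_iff_onQuad]
        exact hqa.onQuad
      · rintro e ⟨⟨c, d, hc, hd, hcd, rfl⟩, hlies⟩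
        rw [liesOn_iff_onQuad] at hlies
        exact huniq c d hc hd hcd hlies
    intro T hT
    simp only [Set.mem_insert_iff, Set.mem_singleton_iff] at hT
    rcases hT with rfl | rfl
    · exact key T T2 hT1 hT2 hne
    · exact key T T1 hT2 hT1 (Ne.symm hne)
end

section
/- For every even k ≥ 4 there exists an edge e of the Klee ladder KL_{2k} that is contained in exactly one perfect matching of KL_{2k}. -/
open SimpleGraph
open scoped Classical

lemma pm_exists_partner {V : Type} {G : SimpleGraph V} {M : Set (Sym2 V)}
    (hM : IsPerfectMatchingSet G M) (w : V) : ∃ y, G.Adj w y ∧ s(w, y) ∈ M := by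
  obtain ⟨e, ⟨heM, hwe⟩, _⟩ := hM.2 w
  obtain ⟨y, rfl⟩ := Sym2.mem_iff_exists.mp hwe
  exact ⟨y, G.mem_edgeSet.mp (hM.1 heM), heM⟩

lemma pm_unique_at {V : Type} {G : SimpleGraph V} {M : Set (Sym2 V)}
    (hM : IsPerfectMatchingSet G M) {e f : Sym2 V} (he : e ∈ M) (hf : f ∈ M)
    {v : V} (hv : v ∈ e) (hv' : v ∈ f) : e = f := by
  obtain ⟨g, _, hg⟩ := hM.2 v
  rw [hg e ⟨he, hv⟩, hg f ⟨hf, hv'⟩]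

lemma pm_excl {V : Type} {G : SimpleGraph V} {M : Set (Sym2 V)}
    (hM : IsPerfectMatchingSet G M) {a b w : V} (h : s(a, b) ∈ M)
    (hw1 : w ≠ a) (hw2 : w ≠ b) : s(w, a) ∉ M := by
  intro hmem
  have := pm_unique_at hM hmem h (Sym2.mem_mk_right w a) (Sym2.mem_mk_left a b)
  rw [Sym2.eq_iff] at this
  tauto

lemma pm_excl' {V : Type} {G : SimpleGraph V} {M : Set (Sym2 V)}
    (hM : IsPerfectMatchingSet G M) {a b w : V} (h : s(a, b) ∈ M)
    (hw1 : w ≠ a) (hw2 : w ≠ b) : s(w, b) ∉ M := by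
  rw [Sym2.eq_swap] at h
  exact pm_excl hM h hw2 hw1

lemma neighbor_inl {n : ℕ} {i : Fin 2} {j : Fin n} {y : (Fin 2 × Fin n) ⊕ Fin 2}
    (h : (kleeLadder n).Adj (.inl (i, j)) y) :
    (∃ j' : Fin n, y = .inl (i, j') ∧ ((j' : ℕ) = (j : ℕ) + 1 ∨ (j : ℕ) = (j' : ℕ) + 1)) ∨
    (∃ i' : Fin 2, y = .inl (i', j) ∧ i' ≠ i) ∨
    (y = .inr 0 ∧ (j : ℕ) = 0) ∨ (y = .inr 1 ∧ (j : ℕ) = n - 1) := by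
  rw [kleeLadder, fromRel_adj] at h
  obtain ⟨hne, h | h⟩ := h <;>
    rcases h with ⟨a, b, c, h1, h2, h3⟩ | ⟨a, b, c, h1, h2, h3⟩ | ⟨a, b, h1, h2, h3⟩ |
      ⟨a, b, h1, h2, h3⟩ | ⟨h1, h2⟩ <;> simp_all <;> aesop

lemma neighbor_inr0 {n : ℕ} {y : (Fin 2 × Fin n) ⊕ Fin 2}
    (h : (kleeLadder n).Adj (.inr 0) y) :
    (∃ (i : Fin 2) (j : Fin n), y = .inl (i, j) ∧ (j : ℕ) = 0) ∨ y = .inr 1 := by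
  rw [kleeLadder, fromRel_adj] at h
  obtain ⟨hne, h | h⟩ := h <;>
    rcases h with ⟨a, b, c, h1, h2, h3⟩ | ⟨a, b, c, h1, h2, h3⟩ | ⟨a, b, h1, h2, h3⟩ |
      ⟨a, b, h1, h2, h3⟩ | ⟨h1, h2⟩ <;> simp_all <;> aesop

lemma neighbor_inr1 {n : ℕ} {y : (Fin 2 × Fin n) ⊕ Fin 2}
    (h : (kleeLadder n).Adj (.inr 1) y) :
    (∃ (i : Fin 2) (j : Fin n), y = .inl (i, j) ∧ (j : ℕ) = n - 1) ∨ y = .inr 0 := by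
  rw [kleeLadder, fromRel_adj] at h
  obtain ⟨hne, h | h⟩ := h <;>
    rcases h with ⟨a, b, c, h1, h2, h3⟩ | ⟨a, b, c, h1, h2, h3⟩ | ⟨a, b, h1, h2, h3⟩ |
      ⟨a, b, h1, h2, h3⟩ | ⟨h1, h2⟩ <;> simp_all <;> aesop

def pmSet (n : ℕ) : Set (Sym2 ((Fin 2 × Fin n) ⊕ Fin 2)) :=
  {e | (∃ j : Fin n, (j : ℕ) = 0 ∧ e = s(.inr 0, .inl (0, j))) ∨
       (∃ j : Fin n, (j : ℕ) = n - 1 ∧ e = s(.inr 1, .inl (1, j))) ∨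
       (∃ (i : Fin 2) (j j' : Fin n), (j' : ℕ) = (j : ℕ) + 1 ∧ ((i : ℕ) + (j : ℕ)) % 2 = 1 ∧
         e = s(.inl (i, j), .inl (i, j')))}

lemma pmSet_subset (n : ℕ) : pmSet n ⊆ (kleeLadder n).edgeSet := by
  rintro e (⟨j, hj, rfl⟩ | ⟨j, hj, rfl⟩ | ⟨i, j, j', hj', hp, rfl⟩) <;>
    rw [SimpleGraph.mem_edgeSet, kleeLadder, fromRel_adj]
  · exact ⟨by simp, Or.inl (Or.inr (Or.inr (Or.inl ⟨0, j, rfl, rfl, hj⟩)))⟩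
  · exact ⟨by simp, Or.inl (Or.inr (Or.inr (Or.inr (Or.inl ⟨1, j, rfl, rfl, hj⟩))))⟩
  · refine ⟨by simp [Fin.ext_iff]; omega, Or.inl (Or.inl ⟨i, j, j', rfl, rfl, hj'⟩)⟩

lemma pmSet_cover (n : ℕ) (hn : 3 ≤ n) (hodd : n % 2 = 1)
    (v : (Fin 2 × Fin n) ⊕ Fin 2) : ∃! e, e ∈ pmSet n ∧ v ∈ e := by
  have h2 : ∀ i : Fin 2, (i : ℕ) = 0 ∨ (i : ℕ) = 1 := by omega
  match v with
  | .inr iv =>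
    rcases h2 iv with h | h
    · have hiv : iv = 0 := Fin.ext h
      subst hiv
      refine ⟨s(.inr 0, .inl (0, ⟨0, by omega⟩)), ⟨Or.inl ⟨⟨0, by omega⟩, rfl, rfl⟩, by simp⟩, ?_⟩
      rintro f ⟨(⟨j, hj, rfl⟩ | ⟨j, hj, rfl⟩ | ⟨i, j, j', hj', hp, rfl⟩), hvf⟩ <;>
        simp_all [Sym2.mem_iff, Sym2.eq_iff, Fin.ext_iff, -Fin.val_eq_zero_iff]
    · have hiv : iv = 1 := Fin.ext h
      subst hiv
      refine ⟨s(.inr 1, .inl (1, ⟨n - 1, by omega⟩)), ⟨Or.inr (Or.inl ⟨⟨n-1, by omega⟩, rfl, rfl⟩), by simp⟩, ?_⟩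
      rintro f ⟨(⟨j, hj, rfl⟩ | ⟨j, hj, rfl⟩ | ⟨i, j, j', hj', hp, rfl⟩), hvf⟩ <;>
        simp_all [Sym2.mem_iff, Sym2.eq_iff, Fin.ext_iff, -Fin.val_eq_zero_iff]
  | .inl (i, j) =>
    by_cases h00 : (i : ℕ) = 0 ∧ (j : ℕ) = 0
    · refine ⟨s(.inr 0, .inl (0, ⟨0, by omega⟩)), ⟨Or.inl ⟨⟨0, by omega⟩, rfl, rfl⟩, ?_⟩, ?_⟩
      · simp [Sym2.mem_iff, Fin.ext_iff, -Fin.val_eq_zero_iff]; omega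
      rintro f ⟨(⟨j₀, hj₀, rfl⟩ | ⟨j₀, hj₀, rfl⟩ | ⟨i₀, j₀, j₀', hj₀', hp, rfl⟩), hvf⟩ <;>
        simp_all [Sym2.mem_iff, Sym2.eq_iff, Fin.ext_iff, -Fin.val_eq_zero_iff] <;> omega
    by_cases h1l : (i : ℕ) = 1 ∧ (j : ℕ) = n - 1
    · refine ⟨s(.inr 1, .inl (1, ⟨n - 1, by omega⟩)), ⟨Or.inr (Or.inl ⟨⟨n-1, by omega⟩, rfl, rfl⟩), ?_⟩, ?_⟩
      · simp [Sym2.mem_iff, Fin.ext_iff, -Fin.val_eq_zero_iff]; omega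
      rintro f ⟨(⟨j₀, hj₀, rfl⟩ | ⟨j₀, hj₀, rfl⟩ | ⟨i₀, j₀, j₀', hj₀', hp, rfl⟩), hvf⟩ <;>
        simp_all [Sym2.mem_iff, Sym2.eq_iff, Fin.ext_iff, -Fin.val_eq_zero_iff] <;> omega
    by_cases hpar : ((i : ℕ) + (j : ℕ)) % 2 = 1
    · have hjn : (j : ℕ) + 1 < n := by
        rcases h2 i with h | h <;> (have := j.isLt; omega)
      refine ⟨s(.inl (i, j), .inl (i, ⟨(j : ℕ) + 1, hjn⟩)),
        ⟨Or.inr (Or.inr ⟨i, j, ⟨(j:ℕ)+1, hjn⟩, rfl, hpar, rfl⟩), by simp⟩, ?_⟩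
      rintro f ⟨(⟨j₀, hj₀, rfl⟩ | ⟨j₀, hj₀, rfl⟩ | ⟨i₀, j₀, j₀', hj₀', hp, rfl⟩), hvf⟩ <;>
        simp_all [Sym2.mem_iff, Sym2.eq_iff, Fin.ext_iff, -Fin.val_eq_zero_iff] <;> omega
    · have hj1 : 1 ≤ (j : ℕ) := by
        rcases h2 i with h | h
        · by_contra hc; exact h00 ⟨h, by omega⟩
        · by_contra hc; omega
      have hjn : (j : ℕ) - 1 < n := by have := j.isLt; omega
      refine ⟨s(.inl (i, ⟨(j : ℕ) - 1, hjn⟩), .inl (i, j)),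
        ⟨Or.inr (Or.inr ⟨i, ⟨(j:ℕ)-1, hjn⟩, j, by simp only [Fin.val_mk]; omega, by simp only [Fin.val_mk]; omega, rfl⟩), by simp⟩, ?_⟩
      rintro f ⟨(⟨j₀, hj₀, rfl⟩ | ⟨j₀, hj₀, rfl⟩ | ⟨i₀, j₀, j₀', hj₀', hp, rfl⟩), hvf⟩ <;>
        simp_all [Sym2.mem_iff, Sym2.eq_iff, Fin.ext_iff, -Fin.val_eq_zero_iff] <;> omega

def rowc (j : ℕ) : Fin 2 := if j % 2 = 0 then 1 else 0

lemma pm_forced (n : ℕ) (hn : 3 ≤ n) (hodd : n % 2 = 1)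
    {M : Set (Sym2 ((Fin 2 × Fin n) ⊕ Fin 2))}
    (hM : IsPerfectMatchingSet (kleeLadder n) M)
    (he : s(.inr 0, .inl (0, ⟨0, by omega⟩)) ∈ M) :
    ∀ j, ∀ hj : j + 1 < n,
      s(.inl (rowc j, ⟨j, by omega⟩), .inl (rowc j, ⟨j + 1, hj⟩)) ∈ M ∧
      s(.inl (rowc (j+1), ⟨j + 1, hj⟩), .inl (rowc (j+1), ⟨j, by omega⟩)) ∉ M := by
  have hrowc : ∀ m, rowc (m + 1) ≠ rowc m := by
    intro m
    have : m % 2 = 0 ∨ m % 2 = 1 := by omega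
    rcases this with h | h <;> simp [rowc, Nat.add_mod, h]
  have hrow2 : ∀ i : Fin 2, ∀ m, i ≠ rowc (m+1) → i = rowc m := by
    intro i m hi
    have h2 : (i : ℕ) = 0 ∨ (i : ℕ) = 1 := by omega
    have : m % 2 = 0 ∨ m % 2 = 1 := by omega
    rcases this with h | h <;> simp_all [rowc, Nat.add_mod, h, Fin.ext_iff, -Fin.val_eq_zero_iff] <;> omega
  intro j
  induction j with
  | zero =>
    intro hj
    have hrc0 : rowc 0 = 1 := rfl
    have hrc1 : rowc 1 = 0 := rfl
    rw [hrc0, hrc1]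
    constructor
    · obtain ⟨y, hadj, hy⟩ := pm_exists_partner hM (.inl (1, ⟨0, by omega⟩))
      rcases neighbor_inl hadj with ⟨j', rfl, hj'⟩ | ⟨i', rfl, hi'⟩ | ⟨rfl, h0⟩ | ⟨rfl, h0⟩
      · have : j' = ⟨1, hj⟩ := by
          simp only [Fin.val_mk] at hj'
          exact Fin.ext (by simp only [Fin.val_mk]; omega)
        rwa [this] at hy
      · exfalso
        have hi0 : i' = 0 := by
          have : (i' : ℕ) = 0 ∨ (i' : ℕ) = 1 := by omega
          rcases this with h | h
          · exact Fin.ext h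
          · exact absurd (Fin.ext h) hi'
        subst hi0
        exact pm_excl' hM he (by simp) (by simp [Fin.ext_iff]) hy
      · exact absurd hy (pm_excl hM he (by simp) (by simp))
      · simp only [Fin.val_mk] at h0; omega
    · exact pm_excl' hM he (by simp) (by simp [Fin.ext_iff])
  | succ j ih =>
    intro hj
    have hj1 : j + 1 < n := by omega
    obtain ⟨ihE, ihN⟩ := ih hj1
    constructor
    · obtain ⟨y, hadj, hy⟩ := pm_exists_partner hM (.inl (rowc (j+1), ⟨j+1, hj1⟩))
      rcases neighbor_inl hadj with ⟨j', rfl, hj'⟩ | ⟨i', rfl, hi'⟩ | ⟨rfl, h0⟩ | ⟨rfl, h0⟩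
      · simp only [Fin.val_mk] at hj'
        rcases hj' with h | h
        · have : j' = ⟨j + 2, hj⟩ := Fin.ext (by simp only [Fin.val_mk]; omega)
          rw [this] at hy
          exact hy
        · exfalso
          have : j' = ⟨j, by omega⟩ := Fin.ext (by simp only [Fin.val_mk]; omega)
          rw [this] at hy
          exact ihN hy
      · exfalso
        have : i' = rowc j := hrow2 i' j hi'
        subst this
        refine pm_excl' hM ihE ?_ ?_ hy
        · simp only [ne_eq, Sum.inl.injEq, Prod.mk.injEq, Fin.ext_iff, Fin.val_mk]
          omega
        · simp only [ne_eq, Sum.inl.injEq, Prod.mk.injEq, Fin.ext_iff, Fin.val_mk]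
          intro ⟨h1, h2⟩
          exact hrowc j (Fin.ext h1)
      · simp only [Fin.val_mk] at h0; omega
      · simp only [Fin.val_mk] at h0; omega
    · have h2 : rowc (j + 2) = rowc j := by
        simp [rowc, Nat.add_mod]
      rw [h2]
      refine pm_excl' hM ihE ?_ ?_
      · simp only [ne_eq, Sum.inl.injEq, Prod.mk.injEq, Fin.ext_iff, Fin.val_mk]
        omega
      · simp only [ne_eq, Sum.inl.injEq, Prod.mk.injEq, Fin.ext_iff, Fin.val_mk]
        omega

lemma pm_eq (n : ℕ) (hn : 3 ≤ n) (hodd : n % 2 = 1)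
    {M : Set (Sym2 ((Fin 2 × Fin n) ⊕ Fin 2))}
    (hM : IsPerfectMatchingSet (kleeLadder n) M)
    (he : s(.inr 0, .inl (0, ⟨0, by omega⟩)) ∈ M) : M = pmSet n := by
  have h2 : ∀ i : Fin 2, (i : ℕ) = 0 ∨ (i : ℕ) = 1 := by omega
  -- the edge at inr 1
  have he1 : s(.inr 1, .inl (1, ⟨n - 1, by omega⟩)) ∈ M := by
    obtain ⟨y, hadj, hy⟩ := pm_exists_partner hM (.inr 1)
    rcases neighbor_inr1 hadj with ⟨i, j, rfl, hjl⟩ | rfl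
    · have hjv : j = ⟨n - 1, by omega⟩ := Fin.ext (by simp only [Fin.val_mk]; omega)
      rw [hjv] at hy
      rcases h2 i with h | h
      · exfalso
        have hi0 : i = 0 := Fin.ext h
        subst hi0
        have hfj : (n - 2) + 1 < n := by omega
        have hE := (pm_forced n hn hodd hM he (n - 2) hfj).1
        have hc : rowc (n - 2) = 0 := by
          have hmod : (n - 2) % 2 = 1 := by omega
          simp [rowc, hmod]
        rw [hc] at hE
        have hmk : (⟨n - 2 + 1, hfj⟩ : Fin n) = ⟨n - 1, by omega⟩ :=
          Fin.ext (by simp only [Fin.val_mk]; omega)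
        rw [hmk] at hE
        exact pm_excl' hM hE (by simp) (by simp) hy
      · have hi1 : i = 1 := Fin.ext h
        rwa [hi1] at hy
    · exact absurd hy (pm_excl hM he (by simp) (by simp))
  have hsup : pmSet n ⊆ M := by
    rintro f (⟨j, hj, rfl⟩ | ⟨j, hj, rfl⟩ | ⟨i, j, j', hj', hp, rfl⟩)
    · have : j = ⟨0, by omega⟩ := Fin.ext (by simp only [Fin.val_mk]; omega)
      rw [this]; exact he
    · have : j = ⟨n - 1, by omega⟩ := Fin.ext (by simp only [Fin.val_mk]; omega)
      rw [this]; exact he1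
    · have hjn : (j : ℕ) + 1 < n := by rw [← hj']; exact j'.isLt
      have hE := (pm_forced n hn hodd hM he (j : ℕ) hjn).1
      have hi : rowc (j : ℕ) = i := by
        have hilt := i.isLt
        refine Fin.ext ?_
        simp only [rowc]
        split <;> simp <;> omega
      rw [hi] at hE
      have hje : (⟨(j : ℕ), by omega⟩ : Fin n) = j := Fin.ext rfl
      have hj'e : (⟨(j : ℕ) + 1, hjn⟩ : Fin n) = j' := Fin.ext (by simp only [Fin.val_mk]; omega)
      rwa [hje, hj'e] at hE
  ext f
  constructor
  · intro hf
    have ha : f.out.1 ∈ f := Sym2.out_fst_mem f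
    obtain ⟨g, ⟨hg, hag⟩, _⟩ := pmSet_cover n hn hodd f.out.1
    have : f = g := pm_unique_at hM hf (hsup hg) ha hag
    rw [this]; exact hg
  · exact fun hf => hsup hf

theorem kleeLadder_edge_in_unique_pm (k : ℕ) (hk : 4 ≤ k) (hke : Even k) :
    ∃ e ∈ (kleeLadder (k - 1)).edgeSet,
      ∃! M : Set (Sym2 ((Fin 2 × Fin (k - 1)) ⊕ Fin 2)),
        IsPerfectMatchingSet (kleeLadder (k - 1)) M ∧ e ∈ M := by
  have hn : 3 ≤ k - 1 := by omega
  have hodd : (k - 1) % 2 = 1 := by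
    obtain ⟨m, rfl⟩ := hke; omega
  refine ⟨s(.inr 0, .inl (0, ⟨0, by omega⟩)), ?_, pmSet (k - 1),
    ⟨⟨pmSet_subset (k - 1), pmSet_cover (k - 1) hn hodd⟩,
      Or.inl ⟨⟨0, by omega⟩, rfl, rfl⟩⟩, ?_⟩
  · rw [SimpleGraph.mem_edgeSet, kleeLadder, fromRel_adj]
    exact ⟨by simp, Or.inl (Or.inr (Or.inr (Or.inl ⟨0, ⟨0, by omega⟩, rfl, rfl, rfl⟩)))⟩
  · rintro M ⟨hM, he⟩
    exact pm_eq (k - 1) hn hodd hM he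
end

section
/- Let G be the ladder L_{2k} (the graph of the k-sided prism, i.e. the Cartesian product of a cycle C_k with K2) for k ≥ 4. Then for every edge e of G there exists a perfect matching M_e of G containing e whose complement E(G) \ M_e is a Hamiltonian cycle of G. -/
open SimpleGraph
open scoped Classical

namespace LadderPCH

open SimpleGraph Walk

variable {k : ℕ}

lemma cast_ne_zero_of_lt (hk : 4 ≤ k) {m : ℕ} (h0 : 0 < m) (h : m < k) :
    (m : ZMod k) ≠ 0 := by
  intro hc
  rw [ZMod.natCast_eq_zero_iff] at hc
  exact absurd (Nat.le_of_dvd h0 hc) (by omega)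

lemma one_ne_zero' (hk : 4 ≤ k) : (1 : ZMod k) ≠ 0 := by
  have := cast_ne_zero_of_lt hk (m := 1) (by omega) (by omega)
  simpa using this

lemma two_ne_zero' (hk : 4 ≤ k) : (2 : ZMod k) ≠ 0 := by
  have := cast_ne_zero_of_lt hk (m := 2) (by omega) (by omega)
  simpa using this

lemma cast_inj' (hk : 4 ≤ k) {m m' : ℕ} (hm : m < k) (hm' : m' < k)
    (h : (m : ZMod k) = (m' : ZMod k)) : m = m' := by
  have := congrArg ZMod.val h
  rwa [ZMod.val_cast_of_lt hm, ZMod.val_cast_of_lt hm'] at this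

lemma km1_cast (hk : 4 ≤ k) : ((k - 1 : ℕ) : ZMod k) = -1 := by
  have h1 : (k - 1) + 1 = k := by omega
  have : ((k - 1 : ℕ) : ZMod k) + 1 = 0 := by
    rw [show (1 : ZMod k) = ((1:ℕ) : ZMod k) by simp, ← Nat.cast_add, h1, ZMod.natCast_self]
  linear_combination this


lemma adj_step (hk : 4 ≤ k) (i : Fin 2) (a : ZMod k) :
    (ladder k).Adj (i, a) (i, a + 1) := by
  rw [ladder, SimpleGraph.fromRel_adj]
  refine ⟨?_, Or.inl (Or.inl ⟨rfl, rfl⟩)⟩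
  intro hc
  have : a = a + 1 := congrArg Prod.snd hc
  exact one_ne_zero' hk (by linear_combination this.symm)

lemma adj_step' (hk : 4 ≤ k) (i : Fin 2) (a : ZMod k) :
    (ladder k).Adj (i, a) (i, a - 1) := by
  have := (adj_step hk i (a - 1)).symm
  simpa using this

lemma adj_rung (hk : 4 ≤ k) (a : ZMod k) :
    (ladder k).Adj (0, a) (1, a) := by
  rw [ladder, SimpleGraph.fromRel_adj]
  refine ⟨fun hc => ?_, Or.inl (Or.inr ⟨rfl, fun hc => ?_⟩)⟩ <;> simp_all

/-- Walk along the top (or bottom) row, increasing the second coordinate. -/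
def rowWalk (hk : 4 ≤ k) (i : Fin 2) (a : ZMod k) :
    (n : ℕ) → (ladder k).Walk (i, a) (i, a + n)
  | 0 => SimpleGraph.Walk.nil.copy rfl (by simp)
  | n + 1 => (SimpleGraph.Walk.cons (adj_step hk i a) (rowWalk hk i (a + 1) n)).copy rfl
      (by push_cast; ring_nf)

/-- Walk along a row, decreasing the second coordinate. -/
def rowWalk' (hk : 4 ≤ k) (i : Fin 2) (a : ZMod k) :
    (n : ℕ) → (ladder k).Walk (i, a) (i, a - n)
  | 0 => SimpleGraph.Walk.nil.copy rfl (by simp)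
  | n + 1 => (SimpleGraph.Walk.cons (adj_step' hk i a) (rowWalk' hk i (a - 1) n)).copy rfl
      (by push_cast; ring_nf)

lemma rowWalk_support (hk : 4 ≤ k) (i : Fin 2) (a : ZMod k) (n : ℕ) :
    (rowWalk hk i a n).support = (List.range (n+1)).map (fun m : ℕ => (i, a + (m : ZMod k))) := by
  induction n generalizing a with
  | zero => simp [rowWalk, show List.range 1 = [0] from rfl]
  | succ n ih =>
      rw [rowWalk, SimpleGraph.Walk.support_copy, SimpleGraph.Walk.support_cons, ih,
        List.range_succ_eq_map (n := n+1), List.map_cons, List.map_map]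
      refine congrArg₂ _ (by simp) (List.map_congr_left fun m _ => ?_)
      simp only [Function.comp_apply]
      push_cast
      ring_nf

lemma rowWalk'_support (hk : 4 ≤ k) (i : Fin 2) (a : ZMod k) (n : ℕ) :
    (rowWalk' hk i a n).support = (List.range (n+1)).map (fun m : ℕ => (i, a - (m : ZMod k))) := by
  induction n generalizing a with
  | zero => simp [rowWalk', show List.range 1 = [0] from rfl]
  | succ n ih =>
      rw [rowWalk', SimpleGraph.Walk.support_copy, SimpleGraph.Walk.support_cons, ih,
        List.range_succ_eq_map (n := n+1), List.map_cons, List.map_map]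
      refine congrArg₂ _ (by simp) (List.map_congr_left fun m _ => ?_)
      simp only [Function.comp_apply]
      push_cast
      ring_nf

lemma rowWalk_edges (hk : 4 ≤ k) (i : Fin 2) (a : ZMod k) (n : ℕ) :
    (rowWalk hk i a n).edges
      = (List.range n).map (fun m : ℕ => s((i, a + (m : ZMod k)), (i, a + (m : ZMod k) + 1))) := by
  induction n generalizing a with
  | zero => simp [rowWalk, show List.range 1 = [0] from rfl]
  | succ n ih =>
      rw [rowWalk, SimpleGraph.Walk.edges_copy, SimpleGraph.Walk.edges_cons, ih,
        List.range_succ_eq_map (n := n), List.map_cons, List.map_map]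
      refine congrArg₂ _ (by simp) (List.map_congr_left fun m _ => ?_)
      simp only [Function.comp_apply]
      push_cast
      ring_nf

lemma rowWalk'_edges (hk : 4 ≤ k) (i : Fin 2) (a : ZMod k) (n : ℕ) :
    (rowWalk' hk i a n).edges
      = (List.range n).map (fun m : ℕ => s((i, a - (m : ZMod k)), (i, a - (m : ZMod k) - 1))) := by
  induction n generalizing a with
  | zero => simp [rowWalk', show List.range 1 = [0] from rfl]
  | succ n ih =>
      rw [rowWalk', SimpleGraph.Walk.edges_copy, SimpleGraph.Walk.edges_cons, ih,
        List.range_succ_eq_map (n := n), List.map_cons, List.map_map]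
      refine congrArg₂ _ (by simp) (List.map_congr_left fun m _ => ?_)
      simp only [Function.comp_apply]
      push_cast
      ring_nf


lemma copy_eq_top (hk : 4 ≤ k) (j : ZMod k) :
    ((0 : Fin 2), j + 1 + ((k-1 : ℕ) : ZMod k)) = ((0 : Fin 2), j) := by
  rw [km1_cast hk]; ring_nf

lemma copy_eq_bot (hk : 4 ≤ k) (j : ZMod k) :
    ((1 : Fin 2), j - ((k-1 : ℕ) : ZMod k)) = ((1 : Fin 2), j + 1) := by
  rw [km1_cast hk]; ring_nf

/-- The Hamiltonian cycle of the ladder avoiding the matching `M j`: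
top row from `j+1` around to `j`, rung down, bottom row back from `j` to `j+1`,
rung up. -/
def hamWalk (hk : 4 ≤ k) (j : ZMod k) : (ladder k).Walk (0, j + 1) (0, j + 1) :=
  ((rowWalk hk 0 (j+1) (k-1)).copy rfl (copy_eq_top hk j)).append
    (SimpleGraph.Walk.cons (adj_rung hk j)
      (((rowWalk' hk 1 j (k-1)).copy rfl (copy_eq_bot hk j)).append
        ((adj_rung hk (j+1)).symm.toWalk)))

lemma hamWalk_support (hk : 4 ≤ k) (j : ZMod k) :
    (hamWalk hk j).support
      = ((List.range k).map (fun m : ℕ => ((0 : Fin 2), j + 1 + (m : ZMod k))))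
        ++ ((List.range k).map (fun m : ℕ => ((1 : Fin 2), j - (m : ZMod k))))
        ++ [((0 : Fin 2), j + 1)] := by
  rw [hamWalk, SimpleGraph.Walk.support_append, SimpleGraph.Walk.support_copy,
    rowWalk_support]
  rw [SimpleGraph.Walk.support_cons, List.tail_cons, SimpleGraph.Walk.support_append,
    SimpleGraph.Walk.support_copy, rowWalk'_support]
  have hks : k - 1 + 1 = k := by omega
  rw [hks]
  simp [SimpleGraph.Walk.support_cons, List.append_assoc]

lemma hamWalk_edges (hk : 4 ≤ k) (j : ZMod k) :
    (hamWalk hk j).edges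
      = ((List.range (k-1)).map
          (fun m : ℕ => s(((0 : Fin 2), j + 1 + (m : ZMod k)), ((0:Fin 2), j + 1 + (m : ZMod k) + 1))))
        ++ (s(((0 : Fin 2), j), ((1 : Fin 2), j))
          :: (((List.range (k-1)).map
              (fun m : ℕ => s(((1 : Fin 2), j - (m : ZMod k)), ((1:Fin 2), j - (m : ZMod k) - 1))))
            ++ [s(((1 : Fin 2), j + 1), ((0 : Fin 2), j + 1))])) := by
  rw [hamWalk, SimpleGraph.Walk.edges_append, SimpleGraph.Walk.edges_copy, rowWalk_edges,
    SimpleGraph.Walk.edges_cons, SimpleGraph.Walk.edges_append, SimpleGraph.Walk.edges_copy,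
    rowWalk'_edges]
  simp


lemma fin2_cases {i i' : Fin 2} (h : i ≠ i') : i = 0 ∧ i' = 1 ∨ i = 1 ∧ i' = 0 := by
  fin_cases i <;> fin_cases i' <;> simp_all

lemma self_ne_add_one (hk : 4 ≤ k) (a : ZMod k) : a ≠ a + 1 := by
  intro h; exact one_ne_zero' hk (by linear_combination h.symm)

lemma mem_edgeSet_iff (hk : 4 ≤ k) (e : Sym2 (Fin 2 × ZMod k)) :
    e ∈ (ladder k).edgeSet ↔
      (∃ (i : Fin 2) (a : ZMod k), e = s((i, a), (i, a + 1))) ∨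
      (∃ a : ZMod k, e = s(((0 : Fin 2), a), ((1 : Fin 2), a))) := by
  constructor
  · induction e using Sym2.ind with
    | _ u v =>
      intro h
      rw [SimpleGraph.mem_edgeSet] at h
      obtain ⟨i, a⟩ := u; obtain ⟨i', a'⟩ := v
      rw [ladder, SimpleGraph.fromRel_adj] at h
      obtain ⟨hne, h | h⟩ := h <;> rcases h with ⟨h1, h2⟩ | ⟨h1, h2⟩
      · exact Or.inl ⟨i, a, by simp only at h1 h2; rw [h1, h2]⟩
      · simp only at h1 h2
        rcases fin2_cases h2 with ⟨hi, hi'⟩ | ⟨hi, hi'⟩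
        · exact Or.inr ⟨a, by rw [hi, hi', h1]⟩
        · exact Or.inr ⟨a', by rw [hi, hi', h1, Sym2.eq_swap]⟩
      · exact Or.inl ⟨i, a', by simp only at h1 h2; rw [h1, h2, Sym2.eq_swap]⟩
      · simp only at h1 h2
        rcases fin2_cases h2 with ⟨hi', hi⟩ | ⟨hi', hi⟩
        · exact Or.inr ⟨a', by rw [hi, hi', h1, Sym2.eq_swap]⟩
        · exact Or.inr ⟨a, by rw [hi, hi', h1]⟩
  · rintro (⟨i, a, rfl⟩ | ⟨a, rfl⟩)
    · exact (adj_step hk i a)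
    · exact (adj_rung hk a)

/-- The perfect matching avoided by `hamWalk j`. -/
def M (k : ℕ) (j : ZMod k) : Set (Sym2 (Fin 2 × ZMod k)) :=
  {e | e = s(((0 : Fin 2), j), ((0 : Fin 2), j + 1)) ∨
       e = s(((1 : Fin 2), j), ((1 : Fin 2), j + 1)) ∨
       ∃ r : ZMod k, r ≠ j ∧ r ≠ j + 1 ∧ e = s(((0 : Fin 2), r), ((1 : Fin 2), r))}

lemma M_subset (hk : 4 ≤ k) (j : ZMod k) : M k j ⊆ (ladder k).edgeSet := by
  rintro e (rfl | rfl | ⟨r, _, _, rfl⟩)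
  · exact adj_step hk 0 j
  · exact adj_step hk 1 j
  · exact adj_rung hk r

lemma M_pm (hk : 4 ≤ k) (j : ZMod k) : IsPerfectMatchingSet (ladder k) (M k j) := by
  have h01 : (0 : Fin 2) ≠ 1 := by decide
  have h10 : (1 : Fin 2) ≠ 0 := by decide
  refine ⟨M_subset hk j, ?_⟩
  rintro ⟨i, r⟩
  by_cases hr : r = j ∨ r = j + 1
  · fin_cases i
    · refine ⟨s(((0 : Fin 2), j), ((0 : Fin 2), j + 1)), ⟨Or.inl rfl, ?_⟩, ?_⟩
      · rcases hr with rfl | rfl <;> simp [Sym2.mem_iff]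
      · rintro e ⟨(rfl | rfl | ⟨r', hr1, hr2, rfl⟩), hm⟩
        · rfl
        · rw [Sym2.mem_iff] at hm
          rcases hm with h | h <;> exact absurd (congrArg Prod.fst h) h01
        · rw [Sym2.mem_iff] at hm
          rcases hm with h | h
          · exfalso
            have hrr : r = r' := congrArg Prod.snd h
            rcases hr with rfl | rfl
            · exact hr1 hrr.symm
            · exact hr2 hrr.symm
          · exact absurd (congrArg Prod.fst h) h01
    · refine ⟨s(((1 : Fin 2), j), ((1 : Fin 2), j + 1)), ⟨Or.inr (Or.inl rfl), ?_⟩, ?_⟩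
      · rcases hr with rfl | rfl <;> simp [Sym2.mem_iff]
      · rintro e ⟨(rfl | rfl | ⟨r', hr1, hr2, rfl⟩), hm⟩
        · rw [Sym2.mem_iff] at hm
          rcases hm with h | h <;> exact absurd (congrArg Prod.fst h) h10
        · rfl
        · rw [Sym2.mem_iff] at hm
          rcases hm with h | h
          · exact absurd (congrArg Prod.fst h) h10
          · exfalso
            have hrr : r = r' := congrArg Prod.snd h
            rcases hr with rfl | rfl
            · exact hr1 hrr.symm
            · exact hr2 hrr.symm
  · push_neg at hr
    refine ⟨s(((0 : Fin 2), r), ((1 : Fin 2), r)), ⟨Or.inr (Or.inr ⟨r, hr.1, hr.2, rfl⟩), ?_⟩, ?_⟩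
    · fin_cases i <;> simp [Sym2.mem_iff]
    · rintro e ⟨(rfl | rfl | ⟨r', hr1, hr2, rfl⟩), hm⟩
      · rw [Sym2.mem_iff] at hm
        rcases hm with h | h
        · exact absurd (congrArg Prod.snd h) hr.1
        · exact absurd (congrArg Prod.snd h) hr.2
      · rw [Sym2.mem_iff] at hm
        rcases hm with h | h
        · exact absurd (congrArg Prod.snd h) hr.1
        · exact absurd (congrArg Prod.snd h) hr.2
      · rw [Sym2.mem_iff] at hm
        rcases hm with h | h <;>
        · have hrr : r' = r := (congrArg Prod.snd h).symm
          subst hrr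
          rfl


lemma val_cast (hk : 4 ≤ k) (a : ZMod k) : ((a.val : ℕ) : ZMod k) = a := by
  haveI : NeZero k := ⟨by omega⟩
  exact ZMod.natCast_rightInverse a

lemma val_lt' (hk : 4 ≤ k) (a : ZMod k) : a.val < k := by
  haveI : NeZero k := ⟨by omega⟩
  exact ZMod.val_lt a

lemma hamWalk_support_tail (hk : 4 ≤ k) (j : ZMod k) :
    (hamWalk hk j).support.tail =
      ((List.range (k-1)).map (fun m : ℕ => ((0 : Fin 2), j + 1 + ((m+1 : ℕ) : ZMod k))))
        ++ ((List.range k).map (fun m : ℕ => ((1 : Fin 2), j - (m : ZMod k))))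
        ++ [((0 : Fin 2), j + 1)] := by
  rw [hamWalk_support hk j]
  have h1 : ∀ n : ℕ, (List.range (n+1)).map (fun m : ℕ => ((0 : Fin 2), j + 1 + (m : ZMod k)))
      = ((0 : Fin 2), j + 1)
        :: (List.range n).map (fun m : ℕ => ((0 : Fin 2), j + 1 + ((m+1 : ℕ) : ZMod k))) := by
    intro n
    rw [List.range_succ_eq_map]
    simp [List.map_map, Function.comp_def]
  have h2 := h1 (k-1)
  rw [Nat.sub_add_cancel (by omega)] at h2
  simp only [h2]
  simp [List.cons_append]

lemma support_tail_nodup (hk : 4 ≤ k) (j : ZMod k) :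
    (hamWalk hk j).support.tail.Nodup := by
  rw [hamWalk_support_tail hk j]
  rw [List.nodup_append', List.nodup_append']
  refine ⟨⟨?_, ?_, ?_⟩, List.nodup_singleton _, ?_⟩
  · refine List.Nodup.map_on ?_ List.nodup_range
    intro m hm m' hm' hf
    rw [List.mem_range] at hm hm'
    have h2 : ((m+1 : ℕ) : ZMod k) = ((m'+1 : ℕ) : ZMod k) := by
      have := congrArg Prod.snd hf
      simpa using this
    have := cast_inj' hk (by omega) (by omega) h2
    omega
  · refine List.Nodup.map_on ?_ List.nodup_range
    intro m hm m' hm' hf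
    rw [List.mem_range] at hm hm'
    have h2 : ((m : ℕ) : ZMod k) = ((m' : ℕ) : ZMod k) := by
      have := congrArg Prod.snd hf
      simp only at this
      linear_combination -this
    exact cast_inj' hk hm hm' h2
  · intro x hx hy
    simp only [List.mem_map, List.mem_range] at hx hy
    obtain ⟨m, _, rfl⟩ := hx
    obtain ⟨m', _, h⟩ := hy
    simpa using congrArg Prod.fst h
  · intro x hx hy
    rw [List.mem_singleton] at hy
    subst hy
    rw [List.mem_append] at hx
    rcases hx with hx | hx <;> simp only [List.mem_map, List.mem_range] at hx
    · obtain ⟨m, hm, h⟩ := hx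
      have h2 : ((m+1 : ℕ) : ZMod k) = 0 := by
        have := congrArg Prod.snd h
        simp only at this
        linear_combination this
      exact cast_ne_zero_of_lt hk (by omega) (by omega) h2
    · obtain ⟨m, hm, h⟩ := hx
      simpa using congrArg Prod.fst h

lemma mem_support_tail (hk : 4 ≤ k) (j : ZMod k) (v : Fin 2 × ZMod k) :
    v ∈ (hamWalk hk j).support.tail := by
  obtain ⟨i, r⟩ := v
  rw [hamWalk_support_tail hk j, List.mem_append, List.mem_append]
  fin_cases i
  · by_cases hrj : r = j + 1
    · exact Or.inr (by simp [hrj])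
    · refine Or.inl (Or.inl ?_)
      rw [List.mem_map]
      set m : ℕ := (r - (j+1)).val with hm
      have hmc : ((m : ℕ) : ZMod k) = r - (j + 1) := val_cast hk _
      have hmlt : m < k := val_lt' hk _
      have hm0 : m ≠ 0 := by
        intro h0
        rw [h0] at hmc
        apply hrj
        push_cast at hmc
        linear_combination -hmc
      refine ⟨m - 1, ?_, ?_⟩
      · rw [List.mem_range]; omega
      · have : m - 1 + 1 = m := by omega
        rw [this, hmc]
        refine Prod.ext rfl ?_
        simp only
        ring
  · refine Or.inl (Or.inr ?_)
    rw [List.mem_map]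
    set m : ℕ := (j - r).val with hm
    have hmc : ((m : ℕ) : ZMod k) = j - r := val_cast hk _
    refine ⟨m, by rw [List.mem_range]; exact val_lt' hk _, ?_⟩
    rw [hmc]
    refine Prod.ext rfl ?_
    simp only
    ring


lemma fin2_01 : ¬ ((0 : Fin 2) = 1) := by decide
lemma fin2_10 : ¬ ((1 : Fin 2) = 0) := by decide

lemma hamWalk_trail (hk : 4 ≤ k) (j : ZMod k) : (hamWalk hk j).IsTrail := by
  rw [SimpleGraph.Walk.isTrail_def, hamWalk_edges hk j]
  refine List.nodup_append'.mpr ⟨?_, ?_, ?_⟩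
  · -- top edges nodup
    refine List.Nodup.map_on ?_ List.nodup_range
    intro m hm m' hm' hf
    rw [List.mem_range] at hm hm'
    rw [Sym2.eq_iff] at hf
    rcases hf with ⟨hA, hB⟩ | ⟨hA, hB⟩
    · have h1 : ((m : ℕ) : ZMod k) = ((m' : ℕ) : ZMod k) := by
        have := congrArg Prod.snd hA
        simp only at this
        linear_combination this
      exact cast_inj' hk (by omega) (by omega) h1
    · exfalso
      apply two_ne_zero' hk
      have e1 := congrArg Prod.snd hA
      have e2 := congrArg Prod.snd hB
      simp only at e1 e2
      linear_combination e2 - e1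
  · -- rung ∷ (bottom edges ++ [rung'])
    rw [List.nodup_cons]
    refine ⟨?_, List.nodup_append'.mpr ⟨?_, List.nodup_singleton _, ?_⟩⟩
    · -- first rung not later
      rw [List.mem_append]
      rintro (h | h)
      · simp only [List.mem_map, List.mem_range] at h
        obtain ⟨m, hm, h⟩ := h
        rw [Sym2.eq_iff] at h
        rcases h with ⟨hA, hB⟩ | ⟨hA, hB⟩
        · exact fin2_10 (congrArg Prod.fst hA)
        · exact fin2_10 (congrArg Prod.fst hB)
      · rw [List.mem_singleton, Sym2.eq_iff] at h
        rcases h with ⟨hA, hB⟩ | ⟨hA, hB⟩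
        · exact fin2_01 (congrArg Prod.fst hA)
        · exact self_ne_add_one hk j (congrArg Prod.snd hA)
    · -- bottom edges nodup
      refine List.Nodup.map_on ?_ List.nodup_range
      intro m hm m' hm' hf
      rw [List.mem_range] at hm hm'
      rw [Sym2.eq_iff] at hf
      rcases hf with ⟨hA, hB⟩ | ⟨hA, hB⟩
      · have h1 : ((m : ℕ) : ZMod k) = ((m' : ℕ) : ZMod k) := by
          have := congrArg Prod.snd hA
          simp only at this
          linear_combination -this
        exact cast_inj' hk (by omega) (by omega) h1
      · exfalso
        apply two_ne_zero' hk
        have e1 := congrArg Prod.snd hA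
        have e2 := congrArg Prod.snd hB
        simp only at e1 e2
        linear_combination e1 - e2
    · -- bottom edges disjoint from [rung']
      intro x hx hy
      rw [List.mem_singleton] at hy
      subst hy
      simp only [List.mem_map, List.mem_range] at hx
      obtain ⟨m, hm, h⟩ := hx
      rw [Sym2.eq_iff] at h
      rcases h with ⟨hA, hB⟩ | ⟨hA, hB⟩
      · exact fin2_10 (congrArg Prod.fst hB)
      · exact fin2_10 (congrArg Prod.fst hA)
  · -- top edges disjoint from the rest
    intro x hx hy
    simp only [List.mem_map, List.mem_range] at hx
    obtain ⟨m, hm, rfl⟩ := hx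
    rw [List.mem_cons, List.mem_append] at hy
    rcases hy with h | h | h
    · rw [Sym2.eq_iff] at h
      rcases h with ⟨hA, hB⟩ | ⟨hA, hB⟩
      · exact fin2_01 (congrArg Prod.fst hB)
      · exact fin2_01 (congrArg Prod.fst hA)
    · simp only [List.mem_map, List.mem_range] at h
      obtain ⟨m', hm', h⟩ := h
      rw [Sym2.eq_iff] at h
      rcases h with ⟨hA, hB⟩ | ⟨hA, hB⟩
      · exact fin2_10 (congrArg Prod.fst hA)
      · exact fin2_10 (congrArg Prod.fst hA)
    · rw [List.mem_singleton, Sym2.eq_iff] at h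
      rcases h with ⟨hA, hB⟩ | ⟨hA, hB⟩
      · exact fin2_01 (congrArg Prod.fst hA)
      · exact fin2_01 (congrArg Prod.fst hB)

lemma hamWalk_ne_nil (hk : 4 ≤ k) (j : ZMod k) : hamWalk hk j ≠ SimpleGraph.Walk.nil := by
  intro h
  have h2 := hamWalk_edges hk j
  rw [h, SimpleGraph.Walk.edges_nil] at h2
  exact absurd h2.symm (by simp)

lemma hamWalk_isHamCycle (hk : 4 ≤ k) (j : ZMod k) :
    (hamWalk hk j).IsHamiltonianCycle := by
  rw [SimpleGraph.Walk.isHamiltonianCycle_iff_isCycle_and_support_count_tail_eq_one]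
  constructor
  · rw [SimpleGraph.Walk.isCycle_def]
    exact ⟨hamWalk_trail hk j, hamWalk_ne_nil hk j, support_tail_nodup hk j⟩
  · intro v
    exact @List.count_eq_one_of_mem _ instBEqOfDecidableEq _ _ _ (support_tail_nodup hk j) (mem_support_tail hk j v)


lemma edges_complement (hk : 4 ≤ k) (j : ZMod k) :
    {e | e ∈ (hamWalk hk j).edges} = (ladder k).edgeSet \ M k j := by
  ext e
  simp only [Set.mem_setOf_eq, Set.mem_diff]
  constructor
  · intro he
    rw [hamWalk_edges hk j, List.mem_append, List.mem_cons, List.mem_append,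
      List.mem_singleton] at he
    rcases he with he | he | he | he
    · -- top edge
      simp only [List.mem_map, List.mem_range] at he
      obtain ⟨m, hm, rfl⟩ := he
      refine ⟨adj_step hk 0 _, ?_⟩
      rintro (h | h | ⟨r, hr1, hr2, h⟩) <;> rw [Sym2.eq_iff] at h
      · rcases h with ⟨hA, hB⟩ | ⟨hA, hB⟩
        · have e1 := congrArg Prod.snd hA
          simp only at e1
          have h2 : ((m : ℕ) : ZMod k) = ((k-1 : ℕ) : ZMod k) := by
            rw [km1_cast hk]; linear_combination e1
          have := cast_inj' hk (by omega) (by omega) h2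
          omega
        · apply two_ne_zero' hk
          have e1 := congrArg Prod.snd hA
          have e2 := congrArg Prod.snd hB
          simp only at e1 e2
          linear_combination e2 - e1
      · rcases h with ⟨hA, hB⟩ | ⟨hA, hB⟩
        · exact fin2_01 (congrArg Prod.fst hB)
        · exact fin2_01 (congrArg Prod.fst hA)
      · rcases h with ⟨hA, hB⟩ | ⟨hA, hB⟩
        · exact fin2_01 (congrArg Prod.fst hB)
        · exact fin2_01 (congrArg Prod.fst hA)
    · -- first rung
      subst he
      refine ⟨adj_rung hk j, ?_⟩
      rintro (h | h | ⟨r, hr1, hr2, h⟩) <;> rw [Sym2.eq_iff] at h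
      · rcases h with ⟨hA, hB⟩ | ⟨hA, hB⟩
        · exact fin2_10 (congrArg Prod.fst hB)
        · exact self_ne_add_one hk j (congrArg Prod.snd hA)
      · rcases h with ⟨hA, hB⟩ | ⟨hA, hB⟩
        · exact fin2_01 (congrArg Prod.fst hA)
        · exact fin2_01 (congrArg Prod.fst hA)
      · rcases h with ⟨hA, hB⟩ | ⟨hA, hB⟩
        · exact hr1 ((congrArg Prod.snd hA).symm)
        · exact fin2_01 (congrArg Prod.fst hA)
    · -- bottom edge
      simp only [List.mem_map, List.mem_range] at he
      obtain ⟨m, hm, rfl⟩ := he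
      refine ⟨adj_step' hk 1 _, ?_⟩
      rintro (h | h | ⟨r, hr1, hr2, h⟩) <;> rw [Sym2.eq_iff] at h
      · rcases h with ⟨hA, hB⟩ | ⟨hA, hB⟩
        · exact fin2_10 (congrArg Prod.fst hA)
        · exact fin2_10 (congrArg Prod.fst hA)
      · rcases h with ⟨hA, hB⟩ | ⟨hA, hB⟩
        · apply two_ne_zero' hk
          have e1 := congrArg Prod.snd hA
          have e2 := congrArg Prod.snd hB
          simp only at e1 e2
          linear_combination e1 - e2
        · have e1 := congrArg Prod.snd hA
          simp only at e1
          have h2 : ((m : ℕ) : ZMod k) = ((k-1 : ℕ) : ZMod k) := by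
            rw [km1_cast hk]; linear_combination -e1
          have := cast_inj' hk (by omega) (by omega) h2
          omega
      · rcases h with ⟨hA, hB⟩ | ⟨hA, hB⟩
        · exact fin2_10 (congrArg Prod.fst hA)
        · exact fin2_01 (congrArg Prod.fst hB).symm
    · -- last rung
      subst he
      refine ⟨((adj_rung hk (j+1)).symm : (ladder k).Adj _ _), ?_⟩
      rintro (h | h | ⟨r, hr1, hr2, h⟩) <;> rw [Sym2.eq_iff] at h
      · rcases h with ⟨hA, hB⟩ | ⟨hA, hB⟩
        · exact fin2_10 (congrArg Prod.fst hA)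
        · exact fin2_10 (congrArg Prod.fst hA)
      · rcases h with ⟨hA, hB⟩ | ⟨hA, hB⟩
        · exact self_ne_add_one hk j ((congrArg Prod.snd hA).symm)
        · exact fin2_01 (congrArg Prod.fst hB)
      · rcases h with ⟨hA, hB⟩ | ⟨hA, hB⟩
        · exact fin2_10 (congrArg Prod.fst hA)
        · exact hr2 ((congrArg Prod.snd hA).symm)
  · rintro ⟨he, hM⟩
    rw [mem_edgeSet_iff hk] at he
    rw [hamWalk_edges hk j, List.mem_append, List.mem_cons, List.mem_append,
      List.mem_singleton]
    rcases he with ⟨i, a, rfl⟩ | ⟨a, rfl⟩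
    · fin_cases i
      · -- top row edge
        have ha : a ≠ j := by
          intro h; subst h
          exact hM (Or.inl rfl)
        refine Or.inl ?_
        simp only [List.mem_map, List.mem_range]
        set m : ℕ := (a - (j+1)).val with hmdef
        have hmc : ((m : ℕ) : ZMod k) = a - (j + 1) := val_cast hk _
        have hmlt : m < k := val_lt' hk _
        have hmne : m ≠ k - 1 := by
          intro h
          apply ha
          rw [h, km1_cast hk] at hmc
          linear_combination -hmc
        refine ⟨m, by omega, ?_⟩
        have hja : j + 1 + ((m : ℕ) : ZMod k) = a := by rw [hmc]; ring
        rw [hja]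
        rfl
      · -- bottom row edge
        have ha : a ≠ j := by
          intro h; subst h
          exact hM (Or.inr (Or.inl rfl))
        refine Or.inr (Or.inr (Or.inl ?_))
        simp only [List.mem_map, List.mem_range]
        set m : ℕ := (j - 1 - a).val with hmdef
        have hmc : ((m : ℕ) : ZMod k) = j - 1 - a := val_cast hk _
        have hmlt : m < k := val_lt' hk _
        have hmne : m ≠ k - 1 := by
          intro h
          apply ha
          rw [h, km1_cast hk] at hmc
          linear_combination hmc
        refine ⟨m, by omega, ?_⟩
        have h1 : j - ((m : ℕ) : ZMod k) = a + 1 := by rw [hmc]; ring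
        have h2 : j - ((m : ℕ) : ZMod k) - 1 = a := by rw [hmc]; ring
        rw [h2, h1, Sym2.eq_swap]
        rfl
    · -- rung
      by_cases haj : a = j
      · subst haj
        exact Or.inr (Or.inl rfl)
      · by_cases haj1 : a = j + 1
        · subst haj1
          exact Or.inr (Or.inr (Or.inr (Sym2.eq_swap)))
        · exact absurd (Or.inr (Or.inr ⟨a, haj, haj1, rfl⟩)) hM

end LadderPCH
theorem ladder_pm_complement_hamiltonian (k : ℕ) (hk : 4 ≤ k) :
    ∀ e ∈ (ladder k).edgeSet,
      ∃ M : Set (Sym2 (Fin 2 × ZMod k)), IsPerfectMatchingSet (ladder k) M ∧ e ∈ M ∧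
        ComplementIsHamCycle (ladder k) M := by
  intro e he
  rw [LadderPCH.mem_edgeSet_iff hk] at he
  rcases he with ⟨i, a, rfl⟩ | ⟨a, rfl⟩
  · refine ⟨LadderPCH.M k a, LadderPCH.M_pm hk a, ?_, ?_⟩
    · fin_cases i
      · exact Or.inl rfl
      · exact Or.inr (Or.inl rfl)
    · exact ⟨(0, a + 1), LadderPCH.hamWalk hk a, LadderPCH.hamWalk_isHamCycle hk a,
        LadderPCH.edges_complement hk a⟩
  · refine ⟨LadderPCH.M k (a + 1), LadderPCH.M_pm hk (a + 1), ?_, ?_⟩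
    · refine Or.inr (Or.inr ⟨a, LadderPCH.self_ne_add_one hk a, ?_, rfl⟩)
      intro h
      apply LadderPCH.two_ne_zero' hk
      linear_combination h.symm
    · exact ⟨(0, a + 1 + 1), LadderPCH.hamWalk hk (a + 1), LadderPCH.hamWalk_isHamCycle hk (a + 1),
        LadderPCH.edges_complement hk (a + 1)⟩
end

section
/- Let G be the Möbius ladder ML_{2k} for k ≥ 4. Then for every edge e of G there exists a perfect matching M_e of G containing e whose complement is a Hamiltonian cycle, and moreover there exists a second perfect matching M'_e ≠ M_e containing e. -/
open SimpleGraph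
open scoped Classical

namespace ML
variable {k : ℕ}
abbrev V (k : ℕ) := ZMod (2 * k)

lemma cast_inj (hk : 4 ≤ k) {i j : ℕ} (hi : i < 2*k) (hj : j < 2*k) :
    ((i : V k) = (j : V k)) ↔ i = j := by
  haveI : NeZero (2*k) := ⟨by omega⟩
  constructor
  · intro h
    have h2 := congrArg ZMod.val h
    rwa [ZMod.val_cast_of_lt hi, ZMod.val_cast_of_lt hj] at h2
  · rintro rfl; rfl

lemma vne (hk : 4 ≤ k) {i j : ℕ} (hi : i < 2*k) (hj : j < 2*k) (h : i ≠ j) :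
    ((i : V k) ≠ (j : V k)) := fun hc => h ((cast_inj hk hi hj).1 hc)

lemma adj_iff (hk : 4 ≤ k) {a b : V k} :
    (mobiusLadder k).Adj a b ↔ a ≠ b ∧ (b = a + 1 ∨ a = b + 1 ∨ b = a + (k:V k)) := by
  haveI : NeZero (2*k) := ⟨by omega⟩
  have hkk : (k : V k) + (k : V k) = 0 := by
    rw [← Nat.cast_add]
    have h2 : k + k = 2*k := by ring
    rw [h2, ZMod.natCast_self]
  constructor
  · rintro ⟨hne, (h|h)|(h|h)⟩
    · exact ⟨hne, Or.inl h⟩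
    · exact ⟨hne, Or.inr (Or.inr h)⟩
    · exact ⟨hne, Or.inr (Or.inl h)⟩
    · refine ⟨hne, Or.inr (Or.inr ?_)⟩
      rw [h]; rw [add_assoc, hkk, add_zero]
  · rintro ⟨hne, (h|h|h)⟩
    · exact ⟨hne, Or.inl (Or.inl h)⟩
    · exact ⟨hne, Or.inr (Or.inl h)⟩
    · refine ⟨hne, Or.inl (Or.inr h)⟩

lemma shift_ne (hk : 4 ≤ k) (a : V k) {i j : ℕ} (hi : i < 2*k) (hj : j < 2*k) (h : i ≠ j) :
    a + (i : V k) ≠ a + (j : V k) := by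
  intro hc
  exact vne hk hi hj h (by simpa using hc)

lemma shift_eq_iff (hk : 4 ≤ k) (a : V k) {i j : ℕ} (hi : i < 2*k) (hj : j < 2*k) :
    a + (i : V k) = a + (j : V k) ↔ i = j := by
  rw [add_right_inj]; exact cast_inj hk hi hj

lemma adj_rim (hk : 4 ≤ k) (v : V k) : (mobiusLadder k).Adj v (v+1) := by
  rw [adj_iff hk]
  refine ⟨?_, Or.inl rfl⟩
  have := shift_ne hk v (i:=0) (j:=1) (by omega) (by omega) (by omega)
  simpa using this

lemma adj_chord (hk : 4 ≤ k) (v : V k) : (mobiusLadder k).Adj v (v+(k:V k)) := by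
  rw [adj_iff hk]
  refine ⟨?_, Or.inr (Or.inr rfl)⟩
  have := shift_ne hk v (i:=0) (j:=k) (by omega) (by omega) (by omega)
  simpa using this

lemma kk0 (hk : 4 ≤ k) : (k : V k) + (k : V k) = 0 := by
  haveI : NeZero (2*k) := ⟨by omega⟩
  rw [← Nat.cast_add]
  have h2 : k + k = 2*k := by ring
  rw [h2, ZMod.natCast_self]

lemma chord_eq_chord (hk : 4 ≤ k) {v w : V k} :
    s(v, v + (k:V k)) = s(w, w + (k:V k)) ↔ (v = w ∨ v = w + (k:V k)) := by
  rw [Sym2.eq_iff]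
  constructor
  · rintro (⟨h, -⟩ | ⟨h, -⟩)
    · exact Or.inl h
    · exact Or.inr h
  · rintro (rfl | rfl)
    · exact Or.inl ⟨rfl, rfl⟩
    · exact Or.inr ⟨rfl, by rw [add_assoc, kk0 hk, add_zero]⟩

lemma rim_ne_chord (hk : 4 ≤ k) (x w : V k) : s(x, x+1) ≠ s(w, w + (k:V k)) := by
  intro h
  rw [Sym2.eq_iff] at h
  rcases h with ⟨rfl, h⟩ | ⟨h1, h2⟩
  · refine shift_ne hk x (i:=1) (j:=k) (by omega) (by omega) (by omega) ?_
    push_cast; exact h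
  · refine shift_ne hk x (i:=0) (j:=k+1) (by omega) (by omega) (by omega) ?_
    push_cast
    rw [← h2] at h1
    linear_combination h1

lemma rim_eq_rim (hk : 4 ≤ k) {x y : V k} : s(x, x+1) = s(y, y+1) ↔ x = y := by
  rw [Sym2.eq_iff]
  constructor
  · rintro (⟨h, -⟩ | ⟨h1, h2⟩)
    · exact h
    · exfalso
      have hy : y + (0:ℕ) = y + ((2:ℕ) : V k) := by
        push_cast
        rw [h1] at h2
        linear_combination -h2
      exact shift_ne hk y (i:=0) (j:=2) (by omega) (by omega) (by omega) hy
  · rintro rfl; exact Or.inl ⟨rfl, rfl⟩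

lemma exists_shift (hk : 4 ≤ k) (a v : V k) : ∃ m : ℕ, m < 2*k ∧ v = a + (m : V k) := by
  haveI : NeZero (2*k) := ⟨by omega⟩
  refine ⟨(v - a).val, ZMod.val_lt _, ?_⟩
  rw [ZMod.natCast_val, ZMod.cast_id]
  ring


def chordM (k : ℕ) : Set (Sym2 (V k)) := {f | ∃ v, f = s(v, v + (k:V k))}

def rimM (k : ℕ) (a : V k) : Set (Sym2 (V k)) :=
  {f | ∃ i : ℕ, i < k ∧ f = s(a + ((2*i : ℕ) : V k), a + ((2*i+1 : ℕ) : V k))}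

def mixM (k : ℕ) (a : V k) : Set (Sym2 (V k)) :=
  {f | f = s(a, a+1) ∨ f = s(a + (k:V k), a + (k:V k) + 1) ∨
    ∃ v, f = s(v, v + (k:V k)) ∧ v ≠ a ∧ v ≠ a+1 ∧ v ≠ a + (k:V k) ∧ v ≠ a + (k:V k) + 1}

lemma chord_flip (hk : 4 ≤ k) (v : V k) :
    s(v + (k:V k), v + (k:V k) + (k:V k)) = s(v, v + (k:V k)) := by
  rw [add_assoc, kk0 hk, add_zero, Sym2.eq_swap]

lemma edge_cases (hk : 4 ≤ k) {e : Sym2 (V k)} (he : e ∈ (mobiusLadder k).edgeSet) :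
    (∃ a, e = s(a, a+1)) ∨ (∃ a, e = s(a, a + (k:V k))) := by
  induction e using Sym2.ind with
  | _ x y =>
    rw [SimpleGraph.mem_edgeSet, adj_iff hk] at he
    rcases he.2 with h | h | h
    · exact Or.inl ⟨x, by rw [h]⟩
    · exact Or.inl ⟨y, by rw [h, Sym2.eq_swap]⟩
    · exact Or.inr ⟨x, by rw [h]⟩

lemma shift_eq (hk : 4 ≤ k) (a : V k) {i j : ℕ} {x y : V k} (hi : i < 2*k) (hj : j < 2*k)
    (hx : x = a + ((i:ℕ) : V k)) (hy : y = a + ((j:ℕ) : V k)) : x = y ↔ i = j := by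
  subst hx; subst hy; exact shift_eq_iff hk a hi hj

theorem chordM_pm (hk : 4 ≤ k) : IsPerfectMatchingSet (mobiusLadder k) (chordM k) := by
  constructor
  · rintro f ⟨v, rfl⟩
    exact adj_chord hk v
  · intro v
    refine ⟨s(v, v + (k:V k)), ⟨⟨v, rfl⟩, Sym2.mem_iff.2 (Or.inl rfl)⟩, ?_⟩
    rintro f ⟨⟨w, rfl⟩, hv⟩
    rw [Sym2.mem_iff] at hv
    rcases hv with rfl | rfl
    · rfl
    · exact (chord_flip hk w).symm

theorem rimM_pm (hk : 4 ≤ k) (a : V k) : IsPerfectMatchingSet (mobiusLadder k) (rimM k a) := by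
  constructor
  · rintro f ⟨i, hi, rfl⟩
    have h : a + ((2*i+1 : ℕ) : V k) = a + ((2*i : ℕ) : V k) + 1 := by push_cast; ring
    rw [h]
    exact adj_rim hk _
  · intro v
    obtain ⟨m, hm, rfl⟩ := exists_shift hk a v
    refine ⟨s(a + ((2*(m/2) : ℕ) : V k), a + ((2*(m/2)+1 : ℕ) : V k)), ⟨⟨m/2, by omega, rfl⟩, ?_⟩, ?_⟩
    · rw [Sym2.mem_iff]
      rcases Nat.even_or_odd m with ⟨t, rfl⟩ | ⟨t, rfl⟩
      · left; rw [shift_eq hk a hm (by omega) rfl rfl]; omega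
      · right; rw [shift_eq hk a hm (by omega) rfl rfl]; omega
    · rintro f ⟨⟨j, hj, rfl⟩, hv⟩
      rw [Sym2.mem_iff] at hv
      have hj' : 2*j = 2*(m/2) := by
        rcases hv with h | h
        · rw [shift_eq hk a hm (by omega) rfl rfl] at h; omega
        · rw [shift_eq hk a hm (by omega) rfl rfl] at h; omega
      have hj'' : j = m/2 := by omega
      rw [hj'']

theorem mixM_pm (hk : 4 ≤ k) (a : V k) : IsPerfectMatchingSet (mobiusLadder k) (mixM k a) := by
  constructor
  · rintro f (rfl | rfl | ⟨w, rfl, -⟩)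
    · exact adj_rim hk a
    · exact adj_rim hk _
    · exact adj_chord hk w
  · intro v
    obtain ⟨m, hm, rfl⟩ := exists_shift hk a v
    by_cases h01 : m = 0 ∨ m = 1
    · refine ⟨s(a, a+1), ⟨Or.inl rfl, ?_⟩, ?_⟩
      · rw [Sym2.mem_iff]
        rcases h01 with rfl | rfl
        · left; simp
        · right; push_cast; ring
      · rintro f ⟨hf | hf | ⟨w, rfl, hw1, hw2, hw3, hw4⟩, hv⟩
        · exact hf
        · exfalso; subst hf
          rw [Sym2.mem_iff] at hv
          rcases hv with h | h
          · rw [shift_eq hk a hm (by omega) rfl rfl] at h; omega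
          · rw [shift_eq hk a hm (by omega) (j := k+1) rfl (by push_cast; ring)] at h; omega
        · exfalso
          rw [Sym2.mem_iff] at hv
          rcases hv with rfl | h
          · rcases h01 with rfl | rfl
            · exact hw1 (by simp)
            · exact hw2 (by push_cast; ring)
          · have hw : w = a + ((m:ℕ) : V k) + (k:V k) := by linear_combination -h - kk0 hk
            rcases h01 with rfl | rfl
            · exact hw3 (by rw [hw]; push_cast; ring)
            · exact hw4 (by rw [hw]; push_cast; ring)
    · by_cases hk01 : m = k ∨ m = k + 1
      · refine ⟨s(a + (k:V k), a + (k:V k) + 1), ⟨Or.inr (Or.inl rfl), ?_⟩, ?_⟩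
        · rw [Sym2.mem_iff]
          rcases hk01 with rfl | rfl
          · left; rfl
          · right; push_cast; ring
        · rintro f ⟨hf | hf | ⟨w, rfl, hw1, hw2, hw3, hw4⟩, hv⟩
          · exfalso; subst hf
            rw [Sym2.mem_iff] at hv
            rcases hv with h | h
            · rw [shift_eq hk a hm (by omega) (j := 0) rfl (by push_cast; ring)] at h; omega
            · rw [shift_eq hk a hm (by omega) (j := 1) rfl (by push_cast; ring)] at h; omega
          · exact hf
          · exfalso
            rw [Sym2.mem_iff] at hv
            rcases hv with rfl | h
            · rcases hk01 with rfl | rfl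
              · exact hw3 rfl
              · exact hw4 (by push_cast; ring)
            · have hw : w = a + ((m:ℕ) : V k) + (k:V k) := by linear_combination -h - kk0 hk
              rcases hk01 with rfl | rfl
              · exact hw1 (by rw [hw]; linear_combination kk0 hk)
              · exact hw2 (by rw [hw]; push_cast; linear_combination kk0 hk)
      · refine ⟨s(a + ((m:ℕ):V k), a + ((m:ℕ):V k) + (k:V k)),
          ⟨Or.inr (Or.inr ⟨a + ((m:ℕ):V k), rfl, ?_, ?_, ?_, ?_⟩), Sym2.mem_iff.2 (Or.inl rfl)⟩, ?_⟩
        · rw [Ne, shift_eq hk a hm (j := 0) (by omega) rfl (by push_cast; ring)]; omega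
        · rw [Ne, shift_eq hk a hm (j := 1) (by omega) rfl (by push_cast; ring)]; omega
        · rw [Ne, shift_eq hk a hm (j := k) (by omega) rfl (by push_cast; ring)]; omega
        · rw [Ne, shift_eq hk a hm (j := k+1) (by omega) rfl (by push_cast; ring)]; omega
        · rintro f ⟨hf | hf | ⟨w, rfl, hw1, hw2, hw3, hw4⟩, hv⟩
          · exfalso; subst hf
            rw [Sym2.mem_iff] at hv
            rcases hv with h | h
            · rw [shift_eq hk a hm (by omega) (j := 0) rfl (by push_cast; ring)] at h; omega
            · rw [shift_eq hk a hm (by omega) (j := 1) rfl (by push_cast; ring)] at h; omega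
          · exfalso; subst hf
            rw [Sym2.mem_iff] at hv
            rcases hv with h | h
            · rw [shift_eq hk a hm (by omega) (j := k) rfl (by push_cast; ring)] at h; omega
            · rw [shift_eq hk a hm (by omega) (j := k+1) rfl (by push_cast; ring)] at h; omega
          · rw [Sym2.mem_iff] at hv
            rcases hv with rfl | h
            · rfl
            · refine (chord_eq_chord hk).2 (Or.inr ?_)
              linear_combination -h - kk0 hk

lemma h2k (hk : 4 ≤ k) : ((2*k : ℕ) : V k) = 0 := ZMod.natCast_self _

lemma pat_inj (hk : 4 ≤ k) (a : V k) {i j : ℕ} (hi : i < 2*k) (hj : j < 2*k) :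
    s(a + (i:V k), a + (i:V k) + 1) = s(a + (j:V k), a + (j:V k) + 1) ↔ i = j := by
  rw [rim_eq_rim hk, shift_eq hk a hi hj rfl rfl]

/-- walk along the rim from `a` to `a + n`. -/
def rimWalk (hk : 4 ≤ k) (a : V k) : (n : ℕ) → (mobiusLadder k).Walk a (a + (n : V k))
  | 0 => Walk.nil.copy rfl (by simp)
  | n+1 => (rimWalk hk a n).concat
      (by have h := adj_rim hk (a + (n : V k))
          have he : a + ((n+1 : ℕ) : V k) = a + (n : V k) + 1 := by push_cast; ring
          rw [he]; exact h)

lemma rimWalk_support (hk : 4 ≤ k) (a : V k) (n : ℕ) :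
    (rimWalk hk a n).support = (List.range (n+1)).map (fun i : ℕ => a + (i : V k)) := by
  induction n with
  | zero => simp [rimWalk, List.range_succ]
  | succ n ih => simp [rimWalk, Walk.support_concat, ih, List.range_succ]

lemma rimWalk_edges (hk : 4 ≤ k) (a : V k) (n : ℕ) :
    (rimWalk hk a n).edges = (List.range n).map (fun i : ℕ => s(a + (i:V k), a + (i:V k) + 1)) := by
  induction n with
  | zero => simp [rimWalk]
  | succ n ih =>
    simp only [rimWalk, Walk.edges_concat, ih, List.range_succ, List.map_append, List.map_cons,
      List.map_nil, List.concat_eq_append]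
    congr 2
    rw [Sym2.eq_iff]
    left
    constructor
    · rfl
    · push_cast; ring

lemma count_one_of_list (hk : 4 ≤ k) (a : V k) {J : List ℕ}
    (hb : ∀ j ∈ J, j < 2*k) (hnd : J.Nodup) (hcov : ∀ m, m < 2*k → m ∈ J) :
    ∀ v : V k, (J.map (fun j : ℕ => a + (j : V k))).count v = 1 := by
  intro v
  have hmapnd : (J.map (fun j : ℕ => a + (j : V k))).Nodup := by
    refine hnd.map_on ?_
    intro x hx y hy hxy
    exact (shift_eq hk a (hb x hx) (hb y hy) rfl rfl).1 hxy
  obtain ⟨m, hm, rfl⟩ := exists_shift hk a v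
  exact List.count_eq_one_of_mem hmapnd (List.mem_map.2 ⟨m, hcov m hm, rfl⟩)

/-- the rim `2k`-cycle at `a`. -/
def rimCycle (hk : 4 ≤ k) (a : V k) : (mobiusLadder k).Walk a a :=
  ((rimWalk hk a (2*k-1)).concat
    (by have h := adj_rim hk (a + ((2*k-1 : ℕ) : V k))
        have he : a + ((2*k-1 : ℕ) : V k) + 1 = a := by
          have h2 := h2k hk
          push_cast [Nat.cast_sub (show 1 ≤ 2*k by omega)] at h2 ⊢
          linear_combination h2
        rw [he] at h
        exact h))

lemma range_eq_cons (k : ℕ) (hk : 4 ≤ k) :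
    List.range (2*k) = 0 :: (List.range (2*k-1)).map (· + 1) := by
  obtain ⟨m, hm⟩ : ∃ m, 2*k = m + 1 := ⟨2*k-1, by omega⟩
  rw [hm, List.range_succ_eq_map]
  have h3 : m = 2*k - 1 := by omega
  rw [h3]
  simp [Nat.succ_eq_add_one]

lemma range_eq_concat (k : ℕ) (hk : 4 ≤ k) :
    List.range (2*k) = (List.range (2*k-1)).concat (2*k-1) := by
  obtain ⟨m, hm⟩ : ∃ m, 2*k = m + 1 := ⟨2*k-1, by omega⟩
  rw [hm, List.range_succ, List.concat_eq_append]
  congr 2 <;> omega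

lemma rimCycle_support_tail (hk : 4 ≤ k) (a : V k) :
    (rimCycle hk a).support.tail =
      (((List.range (2*k-1)).map (· + 1)) ++ [0]).map (fun j : ℕ => a + (j : V k)) := by
  rw [rimCycle, Walk.support_concat, rimWalk_support]
  have h1 : 2*k - 1 + 1 = 2*k := by omega
  rw [h1, range_eq_cons k hk]
  simp [List.concat_eq_append]

lemma rimCycle_edges (hk : 4 ≤ k) (a : V k) :
    (rimCycle hk a).edges =
      (List.range (2*k)).map (fun i : ℕ => s(a + (i:V k), a + (i:V k) + 1)) := by
  rw [rimCycle, Walk.edges_concat, rimWalk_edges, range_eq_concat k hk]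
  rw [List.map_concat]
  congr 1
  rw [Sym2.eq_iff]
  left
  refine ⟨rfl, ?_⟩
  have h2 := h2k hk
  push_cast [Nat.cast_sub (show 1 ≤ 2*k by omega)] at h2 ⊢
  linear_combination -h2

lemma J0_props (hk : 4 ≤ k) :
    (∀ j ∈ ((List.range (2*k-1)).map (· + 1)) ++ [0], j < 2*k) ∧
    (((List.range (2*k-1)).map (· + 1)) ++ [0]).Nodup ∧
    (∀ m, m < 2*k → m ∈ ((List.range (2*k-1)).map (· + 1)) ++ [0]) := by
  refine ⟨?_, ?_, ?_⟩
  · intro j hj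
    simp only [List.mem_append, List.mem_map, List.mem_range, List.mem_singleton] at hj
    rcases hj with ⟨i, hi, rfl⟩ | rfl <;> omega
  · rw [List.nodup_append]
    refine ⟨List.Nodup.map_on ?_ List.nodup_range, List.nodup_singleton _, ?_⟩
    · intro x _ y _ h; omega
    · intro x hx
      simp only [List.mem_map, List.mem_range] at hx
      obtain ⟨i, hi, rfl⟩ := hx
      simp
  · intro m hm
    simp only [List.mem_append, List.mem_map, List.mem_range, List.mem_singleton]
    rcases Nat.eq_zero_or_pos m with rfl | hpos
    · right; rfl
    · left; exact ⟨m-1, by omega, by omega⟩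

lemma rimCycle_isHam (hk : 4 ≤ k) (a : V k) : (rimCycle hk a).IsHamiltonianCycle := by
  rw [Walk.isHamiltonianCycle_iff_isCycle_and_support_count_tail_eq_one]
  obtain ⟨hb, hnd, hcov⟩ := J0_props hk
  have hcount := count_one_of_list hk a hb hnd hcov
  refine ⟨⟨⟨⟨?_⟩, ?_⟩, ?_⟩, ?_⟩
  · rw [rimCycle_edges]
    refine List.Nodup.map_on ?_ List.nodup_range
    intro x hx y hy h
    rw [List.mem_range] at hx hy
    exact (pat_inj hk a hx hy).1 h
  · unfold rimCycle
    exact Walk.concat_ne_nil _ _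
  · rw [rimCycle_support_tail]
    rw [List.nodup_iff_count_le_one]
    intro v
    exact le_of_eq (hcount v)
  · intro v
    rw [rimCycle_support_tail]
    exact hcount v

lemma rimCycle_compl (hk : 4 ≤ k) (a : V k) :
    {e | e ∈ (rimCycle hk a).edges} = (mobiusLadder k).edgeSet \ chordM k := by
  ext e
  simp only [Set.mem_setOf_eq, Set.mem_diff, rimCycle_edges, List.mem_map, List.mem_range]
  constructor
  · rintro ⟨i, hi, rfl⟩
    refine ⟨adj_rim hk _, ?_⟩
    rintro ⟨w, hw⟩
    exact rim_ne_chord hk _ w hw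
  · rintro ⟨he, hnc⟩
    obtain ⟨x, rfl⟩ | ⟨x, rfl⟩ := edge_cases hk he
    · obtain ⟨m, hm, rfl⟩ := exists_shift hk a x
      exact ⟨m, hm, rfl⟩
    · exact absurd ⟨x, rfl⟩ hnc

lemma range_cons (n : ℕ) (h : 1 ≤ n) :
    List.range n = 0 :: (List.range (n-1)).map (· + 1) := by
  obtain ⟨m, rfl⟩ : ∃ m, n = m + 1 := ⟨n-1, by omega⟩
  rw [List.range_succ_eq_map]
  simp [Nat.succ_eq_add_one]

lemma range_concat (n : ℕ) (h : 1 ≤ n) :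
    List.range n = (List.range (n-1)).concat (n-1) := by
  obtain ⟨m, rfl⟩ : ∃ m, n = m + 1 := ⟨n-1, by omega⟩
  rw [List.range_succ, List.concat_eq_append]
  simp

lemma e1_eq (hk : 4 ≤ k) (a : V k) : (a + 1) + ((k-1 : ℕ) : V k) = a + ((k:ℕ) : V k) := by
  push_cast [Nat.cast_sub (show 1 ≤ k by omega)]; ring

lemma e2_eq (hk : 4 ≤ k) (a : V k) : (a + ((k+1 : ℕ) : V k)) + ((k-1 : ℕ) : V k) = a := by
  have h2 := h2k hk
  push_cast [Nat.cast_sub (show 1 ≤ k by omega)] at h2 ⊢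
  linear_combination h2

lemma h1_adj (hk : 4 ≤ k) (a : V k) : (mobiusLadder k).Adj (a + ((k:ℕ) : V k)) a := by
  have h := adj_chord hk (a + ((k:ℕ) : V k))
  have h2 := h2k hk
  have he : a + ((k:ℕ) : V k) + (k : V k) = a := by
    push_cast at h2 ⊢; linear_combination h2
  rwa [he] at h

lemma h2_adj (hk : 4 ≤ k) (a : V k) : (mobiusLadder k).Adj (a + ((k+1 : ℕ) : V k)) (a + 1) := by
  have h := adj_chord hk (a + ((k+1 : ℕ) : V k))
  have h2 := h2k hk
  have he : a + ((k+1 : ℕ) : V k) + (k : V k) = a + 1 := by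
    push_cast at h2 ⊢; linear_combination h2
  rwa [he] at h

/-- The Hamiltonian cycle avoiding the matching `mixM k a`. -/
def mixCycle (hk : 4 ≤ k) (a : V k) : (mobiusLadder k).Walk (a+1) (a+1) :=
  ((rimWalk hk (a+1) (k-1)).copy rfl (e1_eq hk a)).append
    (Walk.cons (h1_adj hk a)
      ((((rimWalk hk (a + ((k+1 : ℕ) : V k)) (k-1)).copy rfl (e2_eq hk a)).reverse).append
        (Walk.cons (h2_adj hk a) Walk.nil)))

def J1 (k : ℕ) : List ℕ :=
  (List.range (k-1)).map (· + 2) ++ (0 :: (((List.range (k-1)).map (k+1+·)).reverse ++ [1]))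

lemma mixCycle_support_tail (hk : 4 ≤ k) (a : V k) :
    (mixCycle hk a).support.tail = (J1 k).map (fun j : ℕ => a + (j : V k)) := by
  rw [mixCycle, Walk.tail_support_append]
  rw [Walk.support_copy, rimWalk_support]
  have hkk : k - 1 + 1 = k := by omega
  rw [hkk]
  rw [Walk.support_cons, List.tail_cons, Walk.support_append, Walk.support_reverse,
    Walk.support_copy, rimWalk_support, hkk, Walk.support_cons, Walk.support_nil,
    List.tail_cons]
  rw [J1, List.map_append, List.map_cons, List.map_append, List.map_reverse]
  congr 1
  · -- first block
    rw [range_cons k (by omega), List.map_cons, List.tail_cons, List.map_map, List.map_map]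
    apply List.map_congr_left
    intro i hi
    simp only [Function.comp_apply]
    push_cast; ring
  · -- second block
    rw [range_concat k (by omega), List.concat_eq_append, List.map_append,
      List.reverse_append, List.map_map]
    simp only [List.map_cons, List.map_nil, List.reverse_cons, List.reverse_nil,
      List.nil_append, List.map_reverse]
    rw [List.singleton_append, List.cons_append]
    congr 1
    · rw [e2_eq hk a]; simp
    congr 2
    · apply List.map_congr_left
      intro i hi
      simp only [Function.comp_apply]
      push_cast; ring
    · congr 1
      push_cast; ring

lemma mixCycle_edges (hk : 4 ≤ k) (a : V k) :
    (mixCycle hk a).edges =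
      (List.range (k-1)).map (fun i : ℕ => s(a + ((i+1 : ℕ) : V k), a + ((i+1 : ℕ) : V k) + 1))
      ++ s(a, a + (k : V k))
      :: (((List.range (k-1)).map
            (fun i : ℕ => s(a + ((k+1+i : ℕ) : V k), a + ((k+1+i : ℕ) : V k) + 1))).reverse
      ++ [s(a+1, a+1 + (k : V k))]) := by
  rw [mixCycle, Walk.edges_append, Walk.edges_copy, rimWalk_edges, Walk.edges_cons,
    Walk.edges_append, Walk.edges_reverse, Walk.edges_copy, rimWalk_edges,
    Walk.edges_cons, Walk.edges_nil]
  congr 1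
  · apply List.map_congr_left
    intro i hi
    rw [List.mem_range] at hi
    congr 1 <;> push_cast <;> ring
  congr 1
  · rw [Sym2.eq_swap]
  congr 1
  · congr 1
    apply List.map_congr_left
    intro i hi
    congr 1 <;> push_cast <;> ring
  · congr 1
    rw [Sym2.eq_swap]
    congr 1
    push_cast; ring

lemma J1_props (hk : 4 ≤ k) :
    (∀ j ∈ J1 k, j < 2*k) ∧ (J1 k).Nodup ∧ (∀ m, m < 2*k → m ∈ J1 k) := by
  refine ⟨?_, ?_, ?_⟩
  · intro j hj
    simp only [J1, List.mem_append, List.mem_map, List.mem_range, List.mem_cons,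
      List.mem_reverse, List.mem_singleton, List.not_mem_nil, or_false] at hj
    rcases hj with ⟨i, hi, rfl⟩ | rfl | ⟨i, hi, rfl⟩ | rfl <;> omega
  · rw [J1, List.nodup_append]
    refine ⟨List.Nodup.map_on (fun x _ y _ h => by omega) List.nodup_range, ?_, ?_⟩
    · rw [List.nodup_cons]
      constructor
      · simp only [List.mem_append, List.mem_reverse, List.mem_map, List.mem_range,
          List.mem_singleton, List.not_mem_nil, or_false]
        rintro (⟨i, hi, h⟩ | h) <;> omega
      · rw [List.nodup_append]
        refine ⟨List.nodup_reverse.2 (List.Nodup.map_on (fun x _ y _ h => by omega)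
          List.nodup_range), List.nodup_singleton _, ?_⟩
        intro x hx
        simp only [List.mem_reverse, List.mem_map, List.mem_range] at hx
        obtain ⟨i, hi, rfl⟩ := hx
        simp only [List.mem_singleton, forall_eq]
        omega
    · intro x hx
      simp only [List.mem_map, List.mem_range] at hx
      obtain ⟨i, hi, rfl⟩ := hx
      simp only [List.mem_cons, List.mem_append, List.mem_reverse, List.mem_map,
        List.mem_range, List.mem_singleton, List.not_mem_nil, or_false]
      rintro b (rfl | ⟨j, hj, rfl⟩ | rfl) h <;> omega
  · intro m hm
    simp only [J1, List.mem_append, List.mem_map, List.mem_range, List.mem_cons,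
      List.mem_reverse, List.mem_singleton, List.not_mem_nil, or_false]
    by_cases h2 : 2 ≤ m ∧ m ≤ k
    · exact Or.inl ⟨m-2, by omega, by omega⟩
    · by_cases h0 : m = 0
      · exact Or.inr (Or.inl h0)
      · by_cases h1 : m = 1
        · exact Or.inr (Or.inr (Or.inr h1))
        · exact Or.inr (Or.inr (Or.inl ⟨m-(k+1), by omega, by omega⟩))

lemma c1_ne_c2 (hk : 4 ≤ k) (a : V k) : s(a, a + (k:V k)) ≠ s(a+1, a+1 + (k:V k)) := by
  intro h
  rcases (chord_eq_chord hk).1 h with h' | h'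
  · exact absurd ((shift_eq hk a (show 0 < 2*k by omega) (show 1 < 2*k by omega)
      (by push_cast; ring) (by push_cast; ring)).1 h') (by omega)
  · exact absurd ((shift_eq hk a (show 0 < 2*k by omega) (show k+1 < 2*k by omega)
      (by push_cast; ring) (by push_cast; ring)).1 h') (by omega)

lemma mixCycle_edges_nodup (hk : 4 ≤ k) (a : V k) : (mixCycle hk a).edges.Nodup := by
  rw [mixCycle_edges, List.nodup_append]
  have hApat : ∀ x ∈ List.range (k-1), ∀ y ∈ List.range (k-1),
      s(a + ((x+1 : ℕ) : V k), a + ((x+1 : ℕ) : V k) + 1)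
        = s(a + ((y+1 : ℕ) : V k), a + ((y+1 : ℕ) : V k) + 1) → x = y := by
    intro x hx y hy h
    rw [List.mem_range] at hx hy
    have := (pat_inj hk a (i := x+1) (j := y+1) (by omega) (by omega)).1 h
    omega
  have hBpat : ∀ x ∈ List.range (k-1), ∀ y ∈ List.range (k-1),
      s(a + ((k+1+x : ℕ) : V k), a + ((k+1+x : ℕ) : V k) + 1)
        = s(a + ((k+1+y : ℕ) : V k), a + ((k+1+y : ℕ) : V k) + 1) → x = y := by
    intro x hx y hy h
    rw [List.mem_range] at hx hy
    have := (pat_inj hk a (i := k+1+x) (j := k+1+y) (by omega) (by omega)).1 h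
    omega
  refine ⟨List.Nodup.map_on hApat List.nodup_range, ?_, ?_⟩
  · rw [List.nodup_cons]
    constructor
    · simp only [List.mem_append, List.mem_reverse, List.mem_map, List.mem_range,
        List.mem_singleton, List.not_mem_nil, or_false]
      rintro (⟨i, hi, h⟩ | h)
      · exact rim_ne_chord hk _ a h
      · exact c1_ne_c2 hk a h
    · rw [List.nodup_append]
      refine ⟨List.nodup_reverse.2 (List.Nodup.map_on hBpat List.nodup_range),
        List.nodup_singleton _, ?_⟩
      intro x hx
      simp only [List.mem_reverse, List.mem_map, List.mem_range] at hx
      obtain ⟨i, hi, rfl⟩ := hx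
      simp only [List.mem_singleton, forall_eq]
      exact rim_ne_chord hk _ (a+1)
  · intro x hx
    simp only [List.mem_map, List.mem_range] at hx
    obtain ⟨i, hi, rfl⟩ := hx
    simp only [List.mem_cons, List.mem_append, List.mem_reverse, List.mem_map,
      List.mem_range, List.mem_singleton, List.not_mem_nil, or_false]
    rintro b (rfl | ⟨j, hj, rfl⟩ | rfl) h
    · exact rim_ne_chord hk _ a h
    · have := (pat_inj hk a (i := i+1) (j := k+1+j) (by omega) (by omega)).1 h
      omega
    · exact rim_ne_chord hk _ (a+1) h

lemma mixCycle_isHam (hk : 4 ≤ k) (a : V k) : (mixCycle hk a).IsHamiltonianCycle := by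
  rw [Walk.isHamiltonianCycle_iff_isCycle_and_support_count_tail_eq_one]
  obtain ⟨hb, hnd, hcov⟩ := J1_props (k := k) hk
  have hcount := count_one_of_list hk a hb hnd hcov
  refine ⟨⟨⟨⟨?_⟩, ?_⟩, ?_⟩, ?_⟩
  · exact mixCycle_edges_nodup hk a
  · intro h
    have := congrArg Walk.edges h
    rw [mixCycle_edges, Walk.edges_nil] at this
    simp at this
  · rw [mixCycle_support_tail, List.nodup_iff_count_le_one]
    intro v
    exact le_of_eq (hcount v)
  · intro v
    rw [mixCycle_support_tail]
    exact hcount v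

lemma mixCycle_compl (hk : 4 ≤ k) (a : V k) :
    {e | e ∈ (mixCycle hk a).edges} = (mobiusLadder k).edgeSet \ mixM k a := by
  have hmem : ∀ e, e ∈ (mixCycle hk a).edges ↔
      ((∃ i < k-1, e = s(a + ((i+1 : ℕ) : V k), a + ((i+1 : ℕ) : V k) + 1)) ∨
        e = s(a, a + (k:V k)) ∨
        (∃ i < k-1, e = s(a + ((k+1+i : ℕ) : V k), a + ((k+1+i : ℕ) : V k) + 1)) ∨
        e = s(a+1, a+1 + (k:V k))) := by
    intro e
    rw [mixCycle_edges]
    simp only [List.mem_append, List.mem_cons, List.mem_reverse, List.mem_map,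
      List.mem_range, List.mem_singleton, List.not_mem_nil, or_false]
    constructor
    · rintro (⟨i, hi, rfl⟩ | h | ⟨i, hi, rfl⟩ | h)
      · exact Or.inl ⟨i, hi, rfl⟩
      · exact Or.inr (Or.inl h)
      · exact Or.inr (Or.inr (Or.inl ⟨i, hi, rfl⟩))
      · exact Or.inr (Or.inr (Or.inr h))
    · rintro (⟨i, hi, rfl⟩ | h | ⟨i, hi, rfl⟩ | h)
      · exact Or.inl ⟨i, hi, rfl⟩
      · exact Or.inr (Or.inl h)
      · exact Or.inr (Or.inr (Or.inl ⟨i, hi, rfl⟩))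
      · exact Or.inr (Or.inr (Or.inr h))
  ext e
  simp only [Set.mem_setOf_eq, Set.mem_diff, hmem]
  constructor
  · rintro (⟨i, hi, rfl⟩ | rfl | ⟨i, hi, rfl⟩ | rfl)
    · refine ⟨adj_rim hk _, ?_⟩
      rintro (h | h | ⟨w, h, hw1, hw2, hw3, hw4⟩)
      · have h' : s(a + ((i+1:ℕ):V k), a + ((i+1:ℕ):V k) + 1)
            = s(a + ((0:ℕ):V k), a + ((0:ℕ):V k) + 1) := by
          rw [h]; congr 1 <;> push_cast <;> ring
        have := (pat_inj hk a (i := i+1) (j := 0) (by omega) (by omega)).1 h'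
        omega
      · have h' : s(a + ((i+1:ℕ):V k), a + ((i+1:ℕ):V k) + 1)
            = s(a + ((k:ℕ):V k), a + ((k:ℕ):V k) + 1) := by
          rw [h]
        have := (pat_inj hk a (i := i+1) (j := k) (by omega) (by omega)).1 h'
        omega
      · exact rim_ne_chord hk _ w h
    · refine ⟨adj_chord hk a, ?_⟩
      rintro (h | h | ⟨w, h, hw1, hw2, hw3, hw4⟩)
      · exact rim_ne_chord hk a a h.symm
      · exact rim_ne_chord hk _ a h.symm
      · rcases (chord_eq_chord hk).1 h with rfl | h'
        · exact hw1 rfl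
        · refine hw3 ?_
          have h2 := h2k hk
          push_cast at h2
          linear_combination -h' - h2
    · refine ⟨adj_rim hk _, ?_⟩
      rintro (h | h | ⟨w, h, hw1, hw2, hw3, hw4⟩)
      · have h' := (pat_inj hk a (i := k+1+i) (j := 0) (by omega) (by omega)).1
          (by rw [h]; congr 1 <;> push_cast <;> ring)
        omega
      · have h' := (pat_inj hk a (i := k+1+i) (j := k) (by omega) (by omega)).1 (by rw [h])
        omega
      · exact rim_ne_chord hk _ w h
    · refine ⟨adj_chord hk _, ?_⟩
      rintro (h | h | ⟨w, h, hw1, hw2, hw3, hw4⟩)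
      · exact rim_ne_chord hk a (a+1) h.symm
      · exact rim_ne_chord hk _ (a+1) h.symm
      · rcases (chord_eq_chord hk).1 h with rfl | h'
        · exact hw2 rfl
        · refine hw4 ?_
          have h2 := h2k hk
          push_cast at h2
          linear_combination -h' - h2
  · rintro ⟨he, hnm⟩
    rcases edge_cases hk he with ⟨x, rfl⟩ | ⟨x, rfl⟩
    · -- rim edge
      obtain ⟨m, hm, rfl⟩ := exists_shift hk a x
      have hm0 : m ≠ 0 := by
        rintro rfl
        exact hnm (Or.inl (by congr 1 <;> push_cast <;> ring))
      have hmk : m ≠ k := by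
        rintro rfl
        exact hnm (Or.inr (Or.inl rfl))
      by_cases hsmall : m ≤ k
      · refine Or.inl ⟨m-1, by omega, ?_⟩
        have : m - 1 + 1 = m := by omega
        rw [this]
      · refine Or.inr (Or.inr (Or.inl ⟨m-(k+1), by omega, ?_⟩))
        have : k+1+(m-(k+1)) = m := by omega
        rw [this]
    · -- chord edge
      obtain ⟨m, hm, rfl⟩ := exists_shift hk a x
      have h2 := h2k hk
      push_cast at h2
      by_cases h0 : m = 0
      · subst h0
        refine Or.inr (Or.inl ?_)
        congr 1 <;> push_cast <;> ring
      · by_cases h1 : m = 1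
        · subst h1
          refine Or.inr (Or.inr (Or.inr ?_))
          congr 1 <;> push_cast <;> ring
        · by_cases hkm : m = k
          · subst hkm
            exact Or.inr (Or.inl ((chord_eq_chord hk).2 (Or.inr rfl)))
          · by_cases hk1m : m = k+1
            · subst hk1m
              refine Or.inr (Or.inr (Or.inr ((chord_eq_chord hk).2 (Or.inr ?_))))
              push_cast; ring
            · exfalso
              refine hnm (Or.inr (Or.inr ⟨a + ((m:ℕ):V k), rfl, ?_, ?_, ?_, ?_⟩))
              · rw [Ne, shift_eq hk a hm (j := 0) (by omega) rfl (by push_cast; ring)]; omega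
              · rw [Ne, shift_eq hk a hm (j := 1) (by omega) rfl (by push_cast; ring)]; omega
              · rw [Ne, shift_eq hk a hm (j := k) (by omega) rfl (by push_cast; ring)]; omega
              · rw [Ne, shift_eq hk a hm (j := k+1) (by omega) rfl (by push_cast; ring)]; omega


lemma chord_notin_rimM (hk : 4 ≤ k) (a w : V k) : s(w, w + (k:V k)) ∉ rimM k a := by
  rintro ⟨i, hi, heq⟩
  refine rim_ne_chord hk (a + ((2*i : ℕ) : V k)) w ?_
  rw [show a + ((2*i : ℕ) : V k) + 1 = a + ((2*i+1 : ℕ) : V k) from by push_cast; ring]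
  exact heq.symm

lemma rim_notin_chordM (hk : 4 ≤ k) (x : V k) : s(x, x+1) ∉ chordM k := by
  rintro ⟨w, heq⟩
  exact rim_ne_chord hk x w heq

end ML

theorem mobiusLadder_pm_complement_hamiltonian (k : ℕ) (hk : 4 ≤ k) :
    ∀ e ∈ (mobiusLadder k).edgeSet,
      ∃ M : Set (Sym2 (ZMod (2 * k))),
        (IsPerfectMatchingSet (mobiusLadder k) M ∧ e ∈ M ∧
          ComplementIsHamCycle (mobiusLadder k) M) ∧
        ∃ M' : Set (Sym2 (ZMod (2 * k))),
          IsPerfectMatchingSet (mobiusLadder k) M' ∧ e ∈ M' ∧ M' ≠ M := by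
  intro e he
  rcases ML.edge_cases hk he with ⟨a, rfl⟩ | ⟨a, rfl⟩
  · -- rim edge
    refine ⟨ML.mixM k a,
      ⟨ML.mixM_pm hk a, Or.inl rfl,
        ⟨a+1, ML.mixCycle hk a, ML.mixCycle_isHam hk a, ML.mixCycle_compl hk a⟩⟩,
      ML.rimM k a, ML.rimM_pm hk a, ?_, ?_⟩
    · refine ⟨0, by omega, ?_⟩
      rw [Sym2.eq_iff]
      exact Or.inl ⟨by simp, by push_cast; ring_nf⟩
    · intro h
      have hc : s(a + ((2:ℕ) : ML.V k), a + ((2:ℕ) : ML.V k) + (k : ML.V k)) ∈ ML.mixM k a := by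
        refine Or.inr (Or.inr ⟨a + ((2:ℕ) : ML.V k), rfl, ?_, ?_, ?_, ?_⟩)
        · rw [Ne, ML.shift_eq hk a (i := 2) (j := 0) (by omega) (by omega) rfl
            (by push_cast; ring)]; omega
        · rw [Ne, ML.shift_eq hk a (i := 2) (j := 1) (by omega) (by omega) rfl
            (by push_cast; ring)]; omega
        · rw [Ne, ML.shift_eq hk a (i := 2) (j := k) (by omega) (by omega) rfl
            (by push_cast; ring)]; omega
        · rw [Ne, ML.shift_eq hk a (i := 2) (j := k+1) (by omega) (by omega) rfl
            (by push_cast; ring)]; omega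
      rw [← h] at hc
      exact ML.chord_notin_rimM hk a _ hc
  · -- chord edge
    refine ⟨ML.chordM k,
      ⟨ML.chordM_pm hk, ⟨a, rfl⟩,
        ⟨a, ML.rimCycle hk a, ML.rimCycle_isHam hk a, ML.rimCycle_compl hk a⟩⟩,
      ML.mixM k (a+1), ML.mixM_pm hk (a+1), ?_, ?_⟩
    · refine Or.inr (Or.inr ⟨a, rfl, ?_, ?_, ?_, ?_⟩)
      · rw [Ne, ML.shift_eq hk a (i := 0) (j := 1) (by omega) (by omega)
          (by push_cast; ring) (by push_cast; ring)]; omega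
      · rw [Ne, ML.shift_eq hk a (i := 0) (j := 2) (by omega) (by omega)
          (by push_cast; ring) (by push_cast; ring)]; omega
      · rw [Ne, ML.shift_eq hk a (i := 0) (j := k+1) (by omega) (by omega)
          (by push_cast; ring) (by push_cast; ring)]; omega
      · rw [Ne, ML.shift_eq hk a (i := 0) (j := k+2) (by omega) (by omega)
          (by push_cast; ring) (by push_cast; ring)]; omega
    · intro h
      have hr : s(a+1, (a+1)+1) ∈ ML.mixM k (a+1) := Or.inl rfl
      rw [h] at hr
      exact ML.rim_notin_chordM hk (a+1) hr
end
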